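/- arXiv:1107.5066 — 3 statements merged into one kernel-verified Lean document; each statement's English description precedes it below -/
import Mathlib

section
/- For the Invincible Fighter (u = 1) and every n ≥ 1, K(n,t) takes every value n, n−1, …, 1 as t ranges from 0 to ∞: for each k ∈ {1, …, n} there exists t ≥ 0 with K(n,t) = k. -/
open Real MeasureTheory Filter Topology

/-- Auxiliary history-based recursion: `Nhist a u n m t` equals `N(m,t)` when `m ≤ n`. -/
noncomputable def Nhist (a : ℕ → ℝ) (u : ℝ) : ℕ → ℕ → ℝ → ℝ
  | 0, _, _ => 0
  | n + 1, m, t =>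
      if m ≤ n then Nhist a u n m t
      else (Finset.Icc 1 (n + 1)).sup'
          (Finset.nonempty_Icc.mpr (Nat.succ_le_succ (Nat.zero_le n)))
          (fun j => a j + (a j * (1 - u) + u) *
            (Real.exp (-t) * ∫ x in (0:ℝ)..t, Nhist a u n (n + 1 - j) x * Real.exp x))

/-- `Nval a u n t` is `N(n,t)`, the optimal expected number of enemy planes shot down,
with `N(0,t) = 0` and `N(n,t) = max_{1 ≤ j ≤ n} N_n(j,t)`. -/
noncomputable def Nval (a : ℕ → ℝ) (u : ℝ) (n : ℕ) (t : ℝ) : ℝ :=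
  Nhist a u n n t

/-- `Nstar a u r t` is `N*(r,t) = e^{-t} ∫_0^t N(r,x) e^x dx` (so `N*(0,t) = 0`). -/
noncomputable def Nstar (a : ℕ → ℝ) (u : ℝ) (r : ℕ) (t : ℝ) : ℝ :=
  Real.exp (-t) * ∫ x in (0:ℝ)..t, Nval a u r x * Real.exp x

/-- `Nalloc a u n j t` is `N_n(j,t) = a(j) + c(j)·N*(n-j,t)` where `c(j) = a(j)(1-u)+u`. -/
noncomputable def Nalloc (a : ℕ → ℝ) (u : ℝ) (n j : ℕ) (t : ℝ) : ℝ :=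
  a j + (a j * (1 - u) + u) * Nstar a u (n - j) t

/-- `Kopt a u n t = min { j ∈ {1,…,n} : N_n(j,t) = N(n,t) }`. -/
noncomputable def Kopt (a : ℕ → ℝ) (u : ℝ) (n : ℕ) (t : ℝ) : ℕ :=
  sInf {j : ℕ | 1 ≤ j ∧ j ≤ n ∧ Nalloc a u n j t = Nval a u n t}

/-! ### Auxiliary lemmas -/

section Aux

variable (a : ℕ → ℝ) (u : ℝ)

lemma Nval_zero (t : ℝ) : Nval a u 0 t = 0 := rfl

lemma Nhist_stable : ∀ n m, m ≤ n → ∀ t, Nhist a u n m t = Nval a u m t := by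
  intro n
  induction n with
  | zero =>
      intro m hm t
      obtain rfl : m = 0 := Nat.le_zero.mp hm
      rfl
  | succ n ih =>
      intro m hm t
      by_cases h : m ≤ n
      · rw [Nhist, if_pos h, ih m h]
      · obtain rfl : m = n + 1 := by omega
        rfl

lemma Nval_succ (n : ℕ) (t : ℝ) :
    Nval a u (n + 1) t = (Finset.Icc 1 (n + 1)).sup'
      (Finset.nonempty_Icc.mpr (Nat.succ_le_succ (Nat.zero_le n)))
      (fun j => Nalloc a u (n + 1) j t) := by
  rw [Nval, Nhist, if_neg (by omega)]
  refine Finset.sup'_congr _ rfl ?_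
  intro j hj
  rw [Finset.mem_Icc] at hj
  have hst : ∀ x : ℝ, Nhist a u n (n + 1 - j) x = Nval a u (n + 1 - j) x :=
    fun x => Nhist_stable a u n _ (by omega) x
  simp only [Nalloc, Nstar, hst]

lemma continuous_sup' {ι : Type*} (s : Finset ι) (hs : s.Nonempty) (f : ι → ℝ → ℝ)
    (hf : ∀ i ∈ s, Continuous (f i)) :
    Continuous fun t => s.sup' hs (fun i => f i t) :=
  Continuous.finset_sup'_apply hs hf

lemma Nstar_continuous_of (r : ℕ) (h : Continuous (Nval a u r)) :
    Continuous (Nstar a u r) := by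
  unfold Nstar
  exact (Real.continuous_exp.comp continuous_neg).mul
    (intervalIntegral.continuous_primitive
      (fun c d => ((h.mul Real.continuous_exp).intervalIntegrable c d)) 0)

lemma Nval_continuous : ∀ r, Continuous (Nval a u r) := by
  intro r
  induction r using Nat.strong_induction_on with
  | _ r ih =>
    match r with
    | 0 => exact (continuous_const : Continuous fun _ : ℝ => (0:ℝ))
    | n + 1 =>
      have he : (fun t => Nval a u (n+1) t) = fun t =>
          (Finset.Icc 1 (n + 1)).sup'
            (Finset.nonempty_Icc.mpr (Nat.succ_le_succ (Nat.zero_le n)))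
            (fun j => Nalloc a u (n + 1) j t) := funext fun t => Nval_succ a u n t
      show Continuous fun t => Nval a u (n+1) t
      rw [he]
      refine continuous_sup' _ _ _ ?_
      intro j hj
      rw [Finset.mem_Icc] at hj
      have hc : Continuous (Nstar a u (n + 1 - j)) :=
        Nstar_continuous_of a u _ (ih (n + 1 - j) (by omega))
      unfold Nalloc
      exact continuous_const.add (continuous_const.mul hc)

lemma Nstar_continuous (r : ℕ) : Continuous (Nstar a u r) :=
  Nstar_continuous_of a u r (Nval_continuous a u r)

lemma Nstar_at_zero (r : ℕ) : Nstar a u r 0 = 0 := by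
  simp [Nstar]

lemma Nstar_zero (t : ℝ) : Nstar a u 0 t = 0 := by
  simp [Nstar, Nval_zero]

lemma Nval_intervalIntegrable (r : ℕ) (c d : ℝ) :
    IntervalIntegrable (fun x => Nval a u r x * Real.exp x) MeasureTheory.volume c d :=
  ((Nval_continuous a u r).mul Real.continuous_exp).intervalIntegrable c d

end Aux

section One

variable (a : ℕ → ℝ)

lemma Nalloc_one (n j : ℕ) (t : ℝ) :
    Nalloc a 1 n j t = a j + Nstar a 1 (n - j) t := by
  simp [Nalloc]

lemma Nval_one_succ (n : ℕ) (t : ℝ) :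
    Nval a 1 (n + 1) t = (Finset.Icc 1 (n + 1)).sup'
      (Finset.nonempty_Icc.mpr (Nat.succ_le_succ (Nat.zero_le n)))
      (fun j => a j + Nstar a 1 (n + 1 - j) t) := by
  rw [Nval_succ]
  exact Finset.sup'_congr _ rfl fun j _ => Nalloc_one a (n+1) j t

lemma Nval_one (t : ℝ) : Nval a 1 1 t = a 1 := by
  rw [show (1:ℕ) = 0 + 1 from rfl, Nval_one_succ]
  simp [Nstar_zero]

/-- lower recursion: choosing `j = 1`. -/
lemma Nval_ge_one (r : ℕ) (t : ℝ) :
    a 1 + Nstar a 1 r t ≤ Nval a 1 (r + 1) t := by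
  rw [Nval_one_succ]
  have h1 : (1:ℕ) ∈ Finset.Icc 1 (r + 1) := by simp
  have := Finset.le_sup' (fun j => a j + Nstar a 1 (r + 1 - j) t) h1
  simpa [-Finset.le_sup'_iff] using this

/-- monotone upper bound for the smoothing operator. -/
lemma Nstar_le_of (r : ℕ) (B : ℝ) (hB : 0 ≤ B)
    (h : ∀ x, 0 ≤ x → Nval a 1 r x ≤ B) (t : ℝ) (ht : 0 ≤ t) :
    Nstar a 1 r t ≤ B * (1 - Real.exp (-t)) := by
  rw [Nstar]
  have hint := Nval_intervalIntegrable a 1 r 0 t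
  have hgint : IntervalIntegrable (fun x => B * Real.exp x) MeasureTheory.volume 0 t :=
    (continuous_const.mul Real.continuous_exp).intervalIntegrable 0 t
  have hmono : (∫ x in (0:ℝ)..t, Nval a 1 r x * Real.exp x) ≤ ∫ x in (0:ℝ)..t, B * Real.exp x := by
    refine intervalIntegral.integral_mono_on ht hint hgint (fun x hx => ?_)
    exact mul_le_mul_of_nonneg_right (h x hx.1) (Real.exp_pos x).le
  have hval : (∫ x in (0:ℝ)..t, B * Real.exp x) = B * (Real.exp t - 1) := by
    rw [intervalIntegral.integral_const_mul, integral_exp, Real.exp_zero]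
  have hex : Real.exp (-t) * Real.exp t = 1 := by rw [← Real.exp_add]; simp
  calc Real.exp (-t) * ∫ x in (0:ℝ)..t, Nval a 1 r x * Real.exp x
      ≤ Real.exp (-t) * (B * (Real.exp t - 1)) := by
        rw [← hval]; exact mul_le_mul_of_nonneg_left hmono (Real.exp_pos _).le
    _ = B * (1 - Real.exp (-t)) := by nlinarith [hex]

lemma Nval_le (ha1 : 0 ≤ a 1) (hja : ∀ j, a j ≤ j * a 1) :
    ∀ r, ∀ t, 0 ≤ t → Nval a 1 r t ≤ r * a 1 := by
  intro r
  induction r using Nat.strong_induction_on with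
  | _ r ih =>
    match r with
    | 0 => intro t ht; simp [Nval_zero]
    | n + 1 =>
      intro t ht
      rw [Nval_one_succ]
      refine Finset.sup'_le _ _ (fun j hj => ?_)
      rw [Finset.mem_Icc] at hj
      have hB : (0:ℝ) ≤ ((n + 1 - j : ℕ) : ℝ) * a 1 := by positivity
      have h1 : Nstar a 1 (n + 1 - j) t ≤ ((n + 1 - j : ℕ) : ℝ) * a 1 := by
        have hb := Nstar_le_of a (n + 1 - j) (((n + 1 - j : ℕ) : ℝ) * a 1) hB
          (fun x hx => ih (n + 1 - j) (by omega) x hx) t ht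
        nlinarith [Real.exp_pos (-t)]
      have h2 : a j ≤ (j : ℝ) * a 1 := hja j
      have hcast : ((j : ℕ) : ℝ) + ((n + 1 - j : ℕ) : ℝ) = ((n + 1 : ℕ) : ℝ) := by
        rw [← Nat.cast_add]; congr 1; omega
      push_cast at hcast ⊢
      nlinarith

lemma Nstar_le (ha1 : 0 ≤ a 1) (hja : ∀ j, a j ≤ j * a 1) (r : ℕ) (t : ℝ) (ht : 0 ≤ t) :
    Nstar a 1 r t ≤ r * a 1 := by
  have hB : (0:ℝ) ≤ (r : ℝ) * a 1 := by positivity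
  have hb := Nstar_le_of a r ((r : ℝ) * a 1) hB (fun x hx => Nval_le a ha1 hja r x hx) t ht
  nlinarith [Real.exp_pos (-t)]

lemma Nstar_lower (ha1 : 0 ≤ a 1) :
    ∀ r : ℕ, ∃ C, 0 ≤ C ∧ ∀ t, 0 ≤ t →
      (r : ℝ) * a 1 - C * (1 + t) ^ r * Real.exp (-t) ≤ Nstar a 1 r t := by
  intro r
  induction r with
  | zero =>
      refine ⟨0, le_refl 0, fun t ht => ?_⟩
      simp [Nstar_zero]
  | succ r ihr =>
      obtain ⟨C, hC, hIH⟩ := ihr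
      refine ⟨((r:ℝ) + 1) * a 1 + C, by positivity, fun t ht => ?_⟩
      have hint1 := Nval_intervalIntegrable a 1 (r + 1) 0 t
      have hcont2 : Continuous fun x : ℝ => ((r:ℝ) + 1) * a 1 * Real.exp x - C * (1 + x) ^ r :=
        (continuous_const.mul Real.continuous_exp).sub
          (continuous_const.mul ((continuous_const.add continuous_id').pow r))
      have hint2 : IntervalIntegrable _ MeasureTheory.volume 0 t := hcont2.intervalIntegrable 0 t
      -- pointwise lower bound for the integrand
      have hmono : (∫ x in (0:ℝ)..t, (((r:ℝ) + 1) * a 1 * Real.exp x - C * (1 + x) ^ r)) ≤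
          ∫ x in (0:ℝ)..t, Nval a 1 (r + 1) x * Real.exp x := by
        refine intervalIntegral.integral_mono_on ht hint2 hint1 (fun x hx => ?_)
        have hx0 : 0 ≤ x := hx.1
        have h1 := hIH x hx0
        have h2 := Nval_ge_one a r x
        have hex : Real.exp (-x) * Real.exp x = 1 := by rw [← Real.exp_add]; simp
        have hh : C * (1 + x) ^ r * Real.exp (-x) * Real.exp x = C * (1 + x) ^ r := by
          rw [mul_assoc, hex, mul_one]
        nlinarith [mul_le_mul_of_nonneg_right h1 (Real.exp_pos x).le,
          mul_le_mul_of_nonneg_right h2 (Real.exp_pos x).le, hh,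
          pow_nonneg (by linarith : (0:ℝ) ≤ 1 + x) r, Real.exp_pos x]
      -- compute / bound the lower integral
      have hsplit : (∫ x in (0:ℝ)..t, (((r:ℝ) + 1) * a 1 * Real.exp x - C * (1 + x) ^ r)) =
          ((r:ℝ) + 1) * a 1 * (Real.exp t - 1) - ∫ x in (0:ℝ)..t, C * (1 + x) ^ r := by
        rw [intervalIntegral.integral_sub (f := fun x => ((r:ℝ) + 1) * a 1 * Real.exp x)
            (g := fun x => C * (1 + x) ^ r)
            ((continuous_const.mul Real.continuous_exp).intervalIntegrable 0 t)
            ((continuous_const.mul ((continuous_const.add continuous_id').pow r)).intervalIntegrable 0 t),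
          intervalIntegral.integral_const_mul, integral_exp, Real.exp_zero]
      have hpoly : (∫ x in (0:ℝ)..t, C * (1 + x) ^ r) ≤ C * (1 + t) ^ (r + 1) := by
        have hb : (∫ x in (0:ℝ)..t, C * (1 + x) ^ r) ≤ ∫ _x in (0:ℝ)..t, C * (1 + t) ^ r := by
          refine intervalIntegral.integral_mono_on ht
            ((continuous_const.mul ((continuous_const.add continuous_id').pow r)).intervalIntegrable 0 t)
            (continuous_const.intervalIntegrable 0 t) (fun x hx => ?_)
          exact mul_le_mul_of_nonneg_left
            (pow_le_pow_left₀ (by linarith [hx.1]) (by linarith [hx.2]) r) hC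
        rw [intervalIntegral.integral_const, smul_eq_mul] at hb
        have hp : (0:ℝ) ≤ (1 + t) ^ r := pow_nonneg (by linarith) r
        calc (∫ x in (0:ℝ)..t, C * (1 + x) ^ r) ≤ (t - 0) * (C * (1 + t) ^ r) := hb
          _ ≤ C * (1 + t) ^ (r + 1) := by rw [pow_succ]; nlinarith
      -- assemble
      rw [Nstar]
      have hex : Real.exp (-t) * Real.exp t = 1 := by rw [← Real.exp_add]; simp
      have hone : (1:ℝ) ≤ (1 + t) ^ (r + 1) := by
        calc (1:ℝ) = 1 ^ (r + 1) := (one_pow _).symm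
        _ ≤ (1 + t) ^ (r + 1) := pow_le_pow_left₀ (by norm_num) (by linarith) _
      have hstep : Real.exp (-t) * (((r:ℝ) + 1) * a 1 * (Real.exp t - 1) - C * (1 + t) ^ (r + 1)) ≤
          Real.exp (-t) * ∫ x in (0:ℝ)..t, Nval a 1 (r + 1) x * Real.exp x := by
        refine mul_le_mul_of_nonneg_left ?_ (Real.exp_pos (-t)).le
        linarith [hsplit ▸ hmono]
      have heq : Real.exp (-t) * (((r:ℝ) + 1) * a 1 * (Real.exp t - 1) - C * (1 + t) ^ (r + 1)) =
          ((r:ℝ) + 1) * a 1 - ((r:ℝ) + 1) * a 1 * Real.exp (-t) -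
            C * (1 + t) ^ (r + 1) * Real.exp (-t) := by
        linear_combination ((r:ℝ) + 1) * a 1 * hex
      push_cast
      nlinarith [hstep, heq, Real.exp_pos (-t), mul_le_mul_of_nonneg_right hone
        (by positivity : (0:ℝ) ≤ (((r:ℝ) + 1) * a 1) * Real.exp (-t))]

lemma Nstar_tendsto (ha1 : 0 ≤ a 1) (hja : ∀ j, a j ≤ j * a 1) (r : ℕ) :
    Tendsto (Nstar a 1 r) atTop (𝓝 ((r : ℝ) * a 1)) := by
  obtain ⟨C, hC, hIH⟩ := Nstar_lower a ha1 r
  have haux : Tendsto (fun t : ℝ => (1 + t) ^ r * Real.exp (-t)) atTop (𝓝 0) := by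
    have h := tendsto_pow_mul_exp_neg_atTop_nhds_zero r
    have h2 : Tendsto (fun t : ℝ => 1 + t) atTop atTop :=
      tendsto_atTop_add_const_left _ 1 tendsto_id
    have h3 := (h.comp h2).mul_const (Real.exp 1)
    rw [zero_mul] at h3
    refine h3.congr (fun t => ?_)
    show (1 + t) ^ r * Real.exp (-(1 + t)) * Real.exp 1 = (1 + t) ^ r * Real.exp (-t)
    rw [mul_assoc, ← Real.exp_add]
    ring_nf
  have hlow : Tendsto (fun t : ℝ => (r : ℝ) * a 1 - C * (1 + t) ^ r * Real.exp (-t))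
      atTop (𝓝 ((r : ℝ) * a 1)) := by
    have := (haux.const_mul C)
    rw [mul_zero] at this
    have h4 := tendsto_const_nhds.sub this (f := fun _ : ℝ => (r : ℝ) * a 1)
    rw [sub_zero] at h4
    refine h4.congr (fun t => ?_)
    ring
  refine tendsto_of_tendsto_of_tendsto_of_le_of_le' hlow tendsto_const_nhds ?_ ?_
  · filter_upwards [eventually_ge_atTop (0:ℝ)] with t ht
    exact hIH t ht
  · filter_upwards [eventually_ge_atTop (0:ℝ)] with t ht
    exact Nstar_le a ha1 hja r t ht

end One

section Concave

variable (a : ℕ → ℝ)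

/-- smoothing preserves concavity inequalities. -/
lemma Nstar_concave_of (i : ℕ)
    (h : ∀ t, 0 ≤ t → Nval a 1 (i + 1) t + Nval a 1 (i - 1) t ≤ 2 * Nval a 1 i t)
    (t : ℝ) (ht : 0 ≤ t) :
    Nstar a 1 (i + 1) t + Nstar a 1 (i - 1) t ≤ 2 * Nstar a 1 i t := by
  rw [Nstar, Nstar, Nstar]
  have hint1 := Nval_intervalIntegrable a 1 (i + 1) 0 t
  have hint2 := Nval_intervalIntegrable a 1 i 0 t
  have hint3 := Nval_intervalIntegrable a 1 (i - 1) 0 t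
  have key : (∫ x in (0:ℝ)..t, Nval a 1 (i + 1) x * Real.exp x) +
      (∫ x in (0:ℝ)..t, Nval a 1 (i - 1) x * Real.exp x) ≤
      2 * ∫ x in (0:ℝ)..t, Nval a 1 i x * Real.exp x := by
    rw [← intervalIntegral.integral_add hint1 hint3, ← intervalIntegral.integral_const_mul]
    refine intervalIntegral.integral_mono_on ht (hint1.add hint3)
      (hint2.const_mul 2) (fun x hx => ?_)
    have := h x hx.1
    nlinarith [Real.exp_pos x]
  nlinarith [Real.exp_pos (-t)]

/-- purely arithmetic: concavity implies antitone differences. -/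
lemma diff_anti_of {f : ℕ → ℝ} (M : ℕ)
    (h : ∀ i, 1 ≤ i → i ≤ M → f (i + 1) + f (i - 1) ≤ 2 * f i) :
    ∀ p, p ≤ M → ∀ q, q ≤ p → f (p + 1) - f p ≤ f (q + 1) - f q := by
  intro p
  induction p with
  | zero =>
      intro _ q hq
      obtain rfl : q = 0 := Nat.le_zero.mp hq
      exact le_refl _
  | succ p ihp =>
      intro hp q hq
      rcases Nat.lt_or_ge q (p + 1) with h1 | h1
      · have hih := ihp (by omega) q (by omega)
        have h2 := h (p + 1) (by omega) hp
        have hps : p + 1 - 1 = p := by omega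
        rw [hps] at h2
        linarith
      · obtain rfl : q = p + 1 := by omega
        exact le_refl _

lemma Nval_concave (ha0 : a 0 = 0) (hmono : StrictMono a)
    (hconc : ∀ j : ℕ, a (j + 2) - a (j + 1) < a (j + 1) - a j) :
    ∀ m, 1 ≤ m → ∀ t, 0 ≤ t →
      Nval a 1 (m + 1) t + Nval a 1 (m - 1) t ≤ 2 * Nval a 1 m t := by
  have ha1 : 0 < a 1 := by
    have := hmono (show 0 < 1 by norm_num); linarith [ha0 ▸ this]
  have hd : StrictAnti (fun j => a (j + 1) - a j) := strictAnti_nat_of_succ_lt hconc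
  intro m
  induction m using Nat.strong_induction_on with
  | _ m ih =>
    intro hm t ht
    rcases Nat.lt_or_ge m 2 with hm2 | hm2
    · -- m = 1
      obtain rfl : m = 1 := by omega
      have hN0 : Nval a 1 (1 - 1) t = 0 := by rw [show (1:ℕ) - 1 = 0 from rfl, Nval_zero]
      have hN1 : Nval a 1 1 t = a 1 := Nval_one a t
      have hN2 : Nval a 1 2 t ≤ 2 * a 1 := by
        rw [show (2:ℕ) = 1 + 1 from rfl, Nval_one_succ]
        refine Finset.sup'_le _ _ (fun j hj => ?_)
        rw [Finset.mem_Icc] at hj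
        obtain ⟨hja, hjb⟩ := hj
        interval_cases j
        · -- j = 1 : a 1 + Nstar a 1 1 t ≤ 2 * a 1
          have hb := Nstar_le_of a 1 (a 1) ha1.le
            (fun x _ => le_of_eq (Nval_one a x)) t ht
          have : (1:ℕ) + 1 - 1 = 1 := rfl
          rw [this]
          nlinarith [Real.exp_pos (-t)]
        · -- j = 2 : a 2 + Nstar a 1 0 t ≤ 2 * a 1
          have : (1:ℕ) + 1 - 2 = 0 := rfl
          rw [this, Nstar_zero]
          have := hconc 0
          rw [ha0] at this
          linarith
      rw [hN0, hN1]
      linarith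
    · -- m ≥ 2
      obtain ⟨m', rfl⟩ : ∃ m', m = m' + 2 := ⟨m - 2, by omega⟩
      have hstar : ∀ i, 1 ≤ i → i ≤ m' + 1 →
          Nstar a 1 (i + 1) t + Nstar a 1 (i - 1) t ≤ 2 * Nstar a 1 i t := by
        intro i h1 h2
        exact Nstar_concave_of a i (fun s hs => ih i (by omega) h1 s hs) t ht
      have hdiff := diff_anti_of (f := fun i => Nstar a 1 i t) (m' + 1) hstar
      -- attainers
      obtain ⟨j1, hj1mem, hj1⟩ := Finset.exists_mem_eq_sup'
        (Finset.nonempty_Icc.mpr (Nat.succ_le_succ (Nat.zero_le (m' + 2))))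
        (fun j => a j + Nstar a 1 (m' + 2 + 1 - j) t)
      obtain ⟨j2, hj2mem, hj2⟩ := Finset.exists_mem_eq_sup'
        (Finset.nonempty_Icc.mpr (Nat.succ_le_succ (Nat.zero_le m')))
        (fun j => a j + Nstar a 1 (m' + 1 - j) t)
      rw [Finset.mem_Icc] at hj1mem hj2mem
      have hNm1 : Nval a 1 (m' + 2 + 1) t = a j1 + Nstar a 1 (m' + 2 + 1 - j1) t := by
        rw [Nval_one_succ]; exact hj1
      have hNm2 : Nval a 1 (m' + 2 - 1) t = a j2 + Nstar a 1 (m' + 1 - j2) t := by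
        rw [show m' + 2 - 1 = m' + 1 from rfl, Nval_one_succ]; exact hj2
      have hle : ∀ j, 1 ≤ j → j ≤ m' + 2 →
          a j + Nstar a 1 (m' + 2 - j) t ≤ Nval a 1 (m' + 2) t := by
        intro j h1 h2
        rw [show m' + 2 = m' + 1 + 1 from rfl, Nval_one_succ]
        exact Finset.le_sup' (fun j => a j + Nstar a 1 (m' + 1 + 1 - j) t)
          (Finset.mem_Icc.mpr ⟨h1, h2⟩)
      rcases Nat.lt_or_ge j1 (j2 + 2) with hcase | hcase
      · -- case A : j1 ≤ j2 + 1, keep (j1, j2)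
        set p := m' + 2 - j1 with hp
        set q := m' + 1 - j2 with hq
        have e1 : m' + 2 + 1 - j1 = p + 1 := by omega
        have e2 : m' + 2 - j2 = q + 1 := by omega
        have hqp : q ≤ p := by omega
        have hpM : p ≤ m' + 1 := by omega
        have hD := hdiff p hpM q hqp
        have hu1 := hle j1 hj1mem.1 (by omega)
        have hu2 := hle j2 hj2mem.1 (by omega)
        rw [e1] at hNm1
        rw [e2] at hu2
        linarith
      · -- case B : j1 ≥ j2 + 2, move to (j1 - 1, j2 + 1)
        have ha_ineq : a j1 + a j2 ≤ a (j1 - 1) + a (j2 + 1) := by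
          have h1 : a (j1 - 1 + 1) - a (j1 - 1) ≤ a (j2 + 1) - a j2 :=
            hd.antitone (by omega)
          have : j1 - 1 + 1 = j1 := by omega
          rw [this] at h1
          linarith
        have hu1 := hle (j1 - 1) (by omega) (by omega)
        have hu2 := hle (j2 + 1) (by omega) (by omega)
        have e1 : m' + 2 - (j1 - 1) = m' + 2 + 1 - j1 := by omega
        have e2 : m' + 2 - (j2 + 1) = m' + 1 - j2 := by omega
        rw [e1] at hu1
        rw [e2] at hu2
        linarith

lemma Nstar_concave (ha0 : a 0 = 0) (hmono : StrictMono a)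
    (hconc : ∀ j : ℕ, a (j + 2) - a (j + 1) < a (j + 1) - a j)
    (i : ℕ) (hi : 1 ≤ i) (t : ℝ) (ht : 0 ≤ t) :
    Nstar a 1 (i + 1) t + Nstar a 1 (i - 1) t ≤ 2 * Nstar a 1 i t :=
  Nstar_concave_of a i (fun s hs => Nval_concave a ha0 hmono hconc i hi s hs) t ht

/-- differences of `Nstar` in the index are antitone. -/
lemma Nstar_diff_anti (ha0 : a 0 = 0) (hmono : StrictMono a)
    (hconc : ∀ j : ℕ, a (j + 2) - a (j + 1) < a (j + 1) - a j)
    (q p : ℕ) (hqp : q ≤ p) (t : ℝ) (ht : 0 ≤ t) :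
    Nstar a 1 (p + 1) t - Nstar a 1 p t ≤ Nstar a 1 (q + 1) t - Nstar a 1 q t := by
  exact diff_anti_of (f := fun i => Nstar a 1 i t) p
    (fun i h1 _ => Nstar_concave a ha0 hmono hconc i h1 t ht) p (le_refl p) q hqp

end Concave

/-- Theorem 4.3: for the Invincible Fighter (`u = 1`) and every `n ≥ 1`, `K(n,t)` takes
every value `k ∈ {1,…,n}` as `t` ranges over `[0,∞)`. -/
theorem invincible_K_all_values
    (a : ℕ → ℝ) (haI : ∀ j, a j ∈ Set.Icc (0:ℝ) 1) (ha0 : a 0 = 0)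
    (hmono : StrictMono a)
    (hconc : ∀ j : ℕ, a (j + 2) - a (j + 1) < a (j + 1) - a j) :
    ∀ n : ℕ, 1 ≤ n → ∀ k : ℕ, 1 ≤ k → k ≤ n →
      ∃ t : ℝ, 0 ≤ t ∧ Kopt a 1 n t = k := by
  have ha1 : 0 < a 1 := by
    have h01 := hmono (show (0:ℕ) < 1 by norm_num)
    rw [ha0] at h01; exact h01
  have hd : StrictAnti (fun j : ℕ => a (j + 1) - a j) := strictAnti_nat_of_succ_lt hconc
  have hja : ∀ j : ℕ, a j ≤ (j : ℝ) * a 1 := by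
    intro j
    induction j with
    | zero => simp [ha0]
    | succ j ihj =>
        have h1 : a (j + 1) - a j ≤ a (0 + 1) - a 0 := hd.antitone (Nat.zero_le j)
        rw [ha0] at h1
        push_cast
        simp only [zero_add] at h1
        linarith
  intro n hn k hk1 hk2
  rcases eq_or_lt_of_le hk2 with rfl | hkn
  · -- k = n : take t = 0
    refine ⟨0, le_refl 0, ?_⟩
    obtain ⟨n', rfl⟩ : ∃ n', k = n' + 1 := ⟨k - 1, by omega⟩
    have hNval : Nval a 1 (n' + 1) 0 = a (n' + 1) := by
      rw [Nval_one_succ]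
      refine le_antisymm (Finset.sup'_le _ _ fun j hj => ?_) ?_
      · rw [Finset.mem_Icc] at hj
        rw [Nstar_at_zero, add_zero]
        exact hmono.monotone hj.2
      · have := Finset.le_sup' (fun j => a j + Nstar a 1 (n' + 1 - j) 0)
          (show n' + 1 ∈ Finset.Icc 1 (n' + 1) by simp)
        simpa [Nstar_at_zero, -Finset.le_sup'_iff] using this
    have hset : {j : ℕ | 1 ≤ j ∧ j ≤ n' + 1 ∧ Nalloc a 1 (n' + 1) j 0 = Nval a 1 (n' + 1) 0}
        = {n' + 1} := by
      ext j
      simp only [Set.mem_setOf_eq, Set.mem_singleton_iff]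
      constructor
      · rintro ⟨h1, h2, h3⟩
        rw [Nalloc_one, Nstar_at_zero, add_zero, hNval] at h3
        exact hmono.injective h3
      · rintro rfl
        exact ⟨by omega, le_refl _, by rw [Nalloc_one, Nstar_at_zero, add_zero, hNval]⟩
    rw [Kopt, hset, csInf_singleton]
  · -- k < n
    have hnk1 : 1 ≤ n - k := by omega
    set g : ℝ → ℝ := fun t =>
      (Nstar a 1 (n - k) t - Nstar a 1 (n - k - 1) t) - (a (k + 1) - a k) with hgdef
    have hg_cont : Continuous g :=
      ((Nstar_continuous a 1 _).sub (Nstar_continuous a 1 _)).sub continuous_const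
    have hdk : 0 < a (k + 1) - a k := sub_pos.mpr (hmono (Nat.lt_succ_self k))
    have hg0 : g 0 < 0 := by
      simp only [hgdef, Nstar_at_zero]
      linarith
    have hlim : Tendsto g atTop (𝓝 (a 1 - (a (k + 1) - a k))) := by
      have h1 := Nstar_tendsto a ha1.le hja (n - k)
      have h2 := Nstar_tendsto a ha1.le hja (n - k - 1)
      have h3 := (h1.sub h2).sub_const (a (k + 1) - a k)
      have hcast : ((n - k : ℕ) : ℝ) * a 1 - ((n - k - 1 : ℕ) : ℝ) * a 1 = a 1 := by
        have he : n - k = (n - k - 1) + 1 := by omega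
        rw [he]; push_cast; ring
      rw [hcast] at h3
      exact h3
    have hlimpos : 0 < a 1 - (a (k + 1) - a k) := by
      have hdk0 : a (k + 1) - a k < a (0 + 1) - a 0 := hd (by omega : 0 < k)
      rw [ha0] at hdk0
      simp only [zero_add, sub_zero] at hdk0
      linarith
    obtain ⟨T, hT0, hTpos⟩ : ∃ T, 0 ≤ T ∧ 0 ≤ g T := by
      have hev := hlim.eventually (lt_mem_nhds hlimpos)
      obtain ⟨T, hT⟩ := (hev.and (eventually_ge_atTop (0:ℝ))).exists
      exact ⟨T, hT.2, hT.1.le⟩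
    set S : Set ℝ := Set.Icc 0 T ∩ {t | 0 ≤ g t} with hSdef
    have hScl : IsClosed S := isClosed_Icc.inter (isClosed_le continuous_const hg_cont)
    have hSne : S.Nonempty := ⟨T, ⟨hT0, le_refl T⟩, hTpos⟩
    have hSbd : BddBelow S := ⟨0, fun x hx => hx.1.1⟩
    set t0 := sInf S with ht0def
    have ht0S : t0 ∈ S := hScl.csInf_mem hSne hSbd
    have ht0nn : 0 ≤ t0 := ht0S.1.1
    have ht0ge : 0 ≤ g t0 := ht0S.2
    have hlt : ∀ t, 0 ≤ t → t < t0 → g t < 0 := by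
      intro t h1 h2
      by_contra hge
      push_neg at hge
      exact absurd (csInf_le hSbd ⟨⟨h1, h2.le.trans ht0S.1.2⟩, hge⟩) (not_le.mpr h2)
    have ht0pos : 0 < t0 := by
      rcases ht0nn.lt_or_eq with h | h
      · exact h
      · exfalso
        rw [← h] at ht0ge
        linarith
    have hgt0 : g t0 = 0 := by
      refine le_antisymm ?_ ht0ge
      have htt : Tendsto g (𝓝[<] t0) (𝓝 (g t0)) :=
        (hg_cont.continuousAt).continuousWithinAt
      refine le_of_tendsto htt ?_
      filter_upwards [Ioo_mem_nhdsLT ht0pos] with t ht'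
      exact (hlt t ht'.1.le ht'.2).le
    refine ⟨t0, ht0nn, ?_⟩
    set f : ℕ → ℝ := fun j => a j + Nstar a 1 (n - j) t0 with hfdef
    have hDanti : ∀ q p, q ≤ p →
        Nstar a 1 (p + 1) t0 - Nstar a 1 p t0 ≤ Nstar a 1 (q + 1) t0 - Nstar a 1 q t0 :=
      fun q p hqp => Nstar_diff_anti a ha0 hmono hconc q p hqp t0 ht0nn
    have hstep : ∀ j, 1 ≤ j → j < n → ∀ p, n - j = p + 1 →
        f (j + 1) - f j = (a (j + 1) - a j) -
          (Nstar a 1 (p + 1) t0 - Nstar a 1 p t0) := by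
      intro j h1 h2 p hp
      have e1 : n - (j + 1) = p := by omega
      simp only [hfdef]
      rw [e1, hp]
      ring
    have hg0eq : Nstar a 1 (n - k - 1 + 1) t0 - Nstar a 1 (n - k - 1) t0
        = a (k + 1) - a k := by
      have e2 : n - k - 1 + 1 = n - k := by omega
      rw [e2]
      simp only [hgdef] at hgt0
      linarith
    have hclaim1 : ∀ j, 1 ≤ j → j < k → f j < f (j + 1) := by
      intro j h1 h2
      have hD := hDanti (n - k - 1) (n - j - 1) (by omega)
      have hdj : a (k + 1) - a k < a (j + 1) - a j := hd h2
      have hs := hstep j h1 (by omega) (n - j - 1) (by omega)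
      linarith
    have hclaim2 : ∀ j, k ≤ j → j < n → f (j + 1) ≤ f j := by
      intro j h1 h2
      have hD := hDanti (n - j - 1) (n - k - 1) (by omega)
      have hdj : a (j + 1) - a j ≤ a (k + 1) - a k := by
        rcases eq_or_lt_of_le h1 with rfl | h
        · exact le_refl _
        · exact (hd h).le
      have hs := hstep j (by omega) h2 (n - j - 1) (by omega)
      linarith
    have hupper : ∀ dd, ∀ j, 1 ≤ j → j + dd = k → f j ≤ f k ∧ (j < k → f j < f k) := by
      intro dd
      induction dd with
      | zero =>
          intro j h1 h2
          obtain rfl : j = k := by omega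
          exact ⟨le_refl _, fun h => absurd h (lt_irrefl _)⟩
      | succ dd ih =>
          intro j h1 h2
          have hjk : j < k := by omega
          have hstep1 : f j < f (j + 1) := hclaim1 j h1 hjk
          have hrest := (ih (j + 1) (by omega) (by omega)).1
          exact ⟨by linarith, fun _ => by linarith⟩
    have hlower : ∀ dd, k + dd ≤ n → f (k + dd) ≤ f k := by
      intro dd
      induction dd with
      | zero => intro _; exact le_refl _
      | succ dd ih =>
          intro h
          have h1 : f (k + dd + 1) ≤ f (k + dd) := hclaim2 (k + dd) (by omega) (by omega)
          have h2 := ih (by omega)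
          have he : k + (dd + 1) = k + dd + 1 := by omega
          rw [he]
          linarith
    have hmax : ∀ j, 1 ≤ j → j ≤ n → f j ≤ f k := by
      intro j h1 h2
      rcases Nat.lt_or_ge j k with h | h
      · exact (hupper (k - j) j h1 (by omega)).1
      · have h3 := hlower (j - k) (by omega)
        rw [show k + (j - k) = j by omega] at h3
        exact h3
    have hstrict : ∀ j, 1 ≤ j → j < k → f j < f k :=
      fun j h1 h2 => (hupper (k - j) j h1 (by omega)).2 h2
    obtain ⟨n', rfl⟩ : ∃ n', n = n' + 1 := ⟨n - 1, by omega⟩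
    have hNv : Nval a 1 (n' + 1) t0 = f k := by
      rw [Nval_one_succ]
      refine le_antisymm (Finset.sup'_le _ _ fun j hj => ?_) ?_
      · rw [Finset.mem_Icc] at hj
        exact hmax j hj.1 hj.2
      · exact Finset.le_sup' (fun j => a j + Nstar a 1 (n' + 1 - j) t0)
          (Finset.mem_Icc.mpr ⟨hk1, by omega⟩)
    have hkS : k ∈ {j : ℕ | 1 ≤ j ∧ j ≤ n' + 1 ∧
        Nalloc a 1 (n' + 1) j t0 = Nval a 1 (n' + 1) t0} := by
      refine ⟨hk1, by omega, ?_⟩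
      rw [Nalloc_one, hNv]
    rw [Kopt]
    refine le_antisymm (csInf_le (OrderBot.bddBelow _) hkS) (le_csInf ⟨k, hkS⟩ ?_)
    rintro j ⟨h1, h2, h3⟩
    by_contra hjk
    push_neg at hjk
    have hlt2 := hstrict j h1 hjk
    rw [Nalloc_one, hNv] at h3
    simp only [hfdef] at hlt2 h3
    linarith
end

section
/- Fix n ≥ 1 and let f(i,t), i = 1, …, n, be positive continuous functions of t ∈ [0,∞) such that f(i,t)/f(i+1,t) is non-decreasing in t for each i = 1, …, n−1. Define K(n,t) = min{ j ∈ {1,…,n} : f(j,t) = max_{i=1,…,n} f(i,t) }. Then t ↦ K(n,t) is non-increasing and right continuous. -/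
/-- Lemma 5.1: given positive continuous functions `f(i,·)`, `i = 1,…,n`, on `[0,∞)`
such that `f(i,t)/f(i+1,t)` is non-decreasing in `t` for `i = 1,…,n-1`, the index
`K(t) = min{ j ∈ {1,…,n} : f(j,t) = max_i f(i,t) }` is non-increasing and right
continuous in `t`. -/
theorem minimax_index_antitone (n : ℕ) (hn : 1 ≤ n) (f : ℕ → ℝ → ℝ)
    (hpos : ∀ i, 1 ≤ i → i ≤ n → ∀ t : ℝ, 0 ≤ t → 0 < f i t)
    (hcont : ∀ i, 1 ≤ i → i ≤ n → ContinuousOn (f i) (Set.Ici (0:ℝ)))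
    (hratio : ∀ i, 1 ≤ i → i + 1 ≤ n →
      MonotoneOn (fun t => f i t / f (i + 1) t) (Set.Ici (0:ℝ)))
    (K : ℝ → ℕ)
    (hK : ∀ t : ℝ, 0 ≤ t →
      IsLeast {j : ℕ | 1 ≤ j ∧ j ≤ n ∧ ∀ i, 1 ≤ i → i ≤ n → f i t ≤ f j t} (K t)) :
    AntitoneOn K (Set.Ici (0:ℝ)) ∧
      ∀ t : ℝ, 0 ≤ t → ∃ ε > (0:ℝ), ∀ s : ℝ, t ≤ s → s < t + ε → K s = K t := by
  -- ratio monotonicity for arbitrary pairs i ≤ j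
  have ratio : ∀ j i, 1 ≤ i → i ≤ j → j ≤ n →
      MonotoneOn (fun t => f i t / f j t) (Set.Ici (0:ℝ)) := by
    intro j
    induction j with
    | zero => intro i h1 h2 h3; omega
    | succ j ih =>
      intro i h1 h2 h3
      rcases eq_or_lt_of_le h2 with heq | hlt
      · subst heq
        intro a ha b hb _
        simp only
        rw [div_self (hpos _ h1 h3 a ha).ne', div_self (hpos _ h1 h3 b hb).ne']
      · have hij : i ≤ j := Nat.lt_succ_iff.mp hlt
        have hjn : j ≤ n := le_trans (Nat.le_succ j) h3
        have h1j : 1 ≤ j := le_trans h1 hij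
        have m1 := ih i h1 hij hjn
        have m2 := hratio j h1j h3
        intro a ha b hb hab
        have hja := hpos j h1j hjn a ha
        have hjb := hpos j h1j hjn b hb
        have hj1a := hpos (j+1) (by omega) h3 a ha
        have key := mul_le_mul (m1 ha hb hab) (m2 ha hb hab)
          (le_of_lt (div_pos hja hj1a))
          (le_of_lt (div_pos (hpos i h1 (by omega) b hb) hjb))
        simp only at key ⊢
        calc f i a / f (j+1) a
            = (f i a / f j a) * (f j a / f (j+1) a) := by
              field_simp
          _ ≤ (f i b / f j b) * (f j b / f (j+1) b) := key
          _ = f i b / f (j+1) b := by field_simp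
  -- key comparison transport
  have key : ∀ (i j : ℕ) (s t : ℝ), 1 ≤ i → i ≤ j → j ≤ n → 0 ≤ s → s ≤ t →
      f j s ≤ f i s → f j t ≤ f i t := by
    intro i j s t h1 hij hjn hs hst hfs
    have ht : (0:ℝ) ≤ t := le_trans hs hst
    have hm := ratio j i h1 hij hjn hs ht hst
    have hjs := hpos j (le_trans h1 hij) hjn s hs
    have hjt := hpos j (le_trans h1 hij) hjn t ht
    have h1le : (1:ℝ) ≤ f i s / f j s := (one_le_div hjs).mpr hfs
    have h2le : (1:ℝ) ≤ f i t / f j t := le_trans h1le hm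
    exact (one_le_div hjt).mp h2le
  constructor
  · intro s hs t ht hst
    simp only [Set.mem_Ici] at hs ht
    obtain ⟨⟨hKs1, hKsn, hKsmax⟩, hKsleast⟩ := hK s hs
    obtain ⟨⟨hKt1, hKtn, hKtmax⟩, hKtleast⟩ := hK t ht
    by_contra h
    push_neg at h
    -- h : K s < K t
    have hle : f (K t) s ≤ f (K s) s := hKsmax (K t) hKt1 hKtn
    have h2 : f (K t) t ≤ f (K s) t := key (K s) (K t) s t hKs1 (le_of_lt h) hKtn hs hst hle
    have : K t ≤ K s := hKtleast ⟨hKs1, hKsn, fun i h1 h2' =>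
      le_trans (hKtmax i h1 h2') h2⟩
    omega
  · intro t ht
    obtain ⟨⟨hKt1, hKtn, hKtmax⟩, hKtleast⟩ := hK t ht
    set j := K t with hj
    -- strict inequality for i < j at t
    have hstrict : ∀ i ∈ Finset.Ico 1 j, f i t < f j t := by
      intro i hi
      simp only [Finset.mem_Ico] at hi
      obtain ⟨hi1, hij⟩ := hi
      have hin : i ≤ n := le_trans (le_of_lt hij) hKtn
      by_contra hcon
      push_neg at hcon
      have : j ≤ i := hKtleast ⟨hi1, hin, fun k hk1 hkn =>
        le_trans (hKtmax k hk1 hkn) hcon⟩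
      omega
    -- eventual strictness on the right
    have hev : ∀ᶠ s in nhdsWithin t (Set.Ici t),
        ∀ i ∈ Finset.Ico 1 j, f i s < f j s := by
      rw [Filter.eventually_all_finset]
      intro i hi
      have hi' := hi
      simp only [Finset.mem_Ico] at hi'
      have hin : i ≤ n := le_trans (le_of_lt hi'.2) hKtn
      have hmono : nhdsWithin t (Set.Ici t) ≤ nhdsWithin t (Set.Ici (0:ℝ)) :=
        nhdsWithin_mono t (Set.Ici_subset_Ici.mpr ht)
      have hti : Filter.Tendsto (f i) (nhdsWithin t (Set.Ici t)) (nhds (f i t)) :=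
        ((hcont i hi'.1 hin t ht).tendsto).mono_left hmono
      have htj : Filter.Tendsto (f j) (nhdsWithin t (Set.Ici t)) (nhds (f j t)) :=
        ((hcont j hKt1 hKtn t ht).tendsto).mono_left hmono
      exact hti.eventually_lt htj (hstrict i hi)
    rw [Filter.eventually_iff, mem_nhdsGE_iff_exists_Ico_subset] at hev
    obtain ⟨u, hu, hsub⟩ := hev
    simp only [Set.mem_Ioi] at hu
    refine ⟨u - t, by linarith, ?_⟩
    intro s hts hsu
    have hsu' : s < u := by linarith
    have hs0 : (0:ℝ) ≤ s := le_trans ht hts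
    have hslt : ∀ i ∈ Finset.Ico 1 j, f i s < f j s := hsub ⟨hts, hsu'⟩
    obtain ⟨⟨hKs1, hKsn, hKsmax⟩, hKsleast⟩ := hK s hs0
    have hjset : K s ≤ j := hKsleast ⟨hKt1, hKtn, fun i h1 h2' => by
      rcases lt_or_ge i j with hij | hij
      · exact le_of_lt (hslt i (Finset.mem_Ico.mpr ⟨h1, hij⟩))
      · exact key j i t s hKt1 hij h2' ht hts (hKtmax i h1 h2')⟩
    have : ¬ K s < j := by
      intro hlt
      have := hslt (K s) (Finset.mem_Ico.mpr ⟨hKs1, hlt⟩)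
      have := hKsmax j hKt1 hKtn
      linarith
    omega
end

section
/- For the Frail Fighter (u = 0), for every integer k ≥ 2 the ratio t ↦ N(k,t)/N(k−1,t) is non-decreasing on [0,∞); consequently, for every k ≥ 2, t ↦ N*(k,t)/N*(k−1,t) is non-decreasing on (0,∞). -/
open Real MeasureTheory Filter Topology

lemma nhist_stable (a : ℕ → ℝ) (u : ℝ) : ∀ n m t, m ≤ n → Nhist a u n m t = Nval a u m t := by
  intro n
  induction n with
  | zero => intro m t hm; interval_cases m; rfl
  | succ n ih =>
    intro m t hm
    rcases Nat.lt_or_ge m (n+1) with h | h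
    · have h' : m ≤ n := Nat.lt_succ_iff.mp h
      rw [show Nhist a u (n+1) m t = Nhist a u n m t from if_pos h', ih m t h']
    · have : m = n + 1 := le_antisymm hm h
      subst this; rfl

lemma nval_zero (a : ℕ → ℝ) (u : ℝ) (t : ℝ) : Nval a u 0 t = 0 := rfl

lemma icc_ne (n : ℕ) : (Finset.Icc 1 (n+1)).Nonempty :=
  Finset.nonempty_Icc.mpr (Nat.succ_le_succ (Nat.zero_le n))

lemma nval_succ (a : ℕ → ℝ) (n : ℕ) (t : ℝ) :
    Nval a 0 (n+1) t = (Finset.Icc 1 (n + 1)).sup' (icc_ne n)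
          (fun j => a j * (1 + Nstar a 0 (n + 1 - j) t)) := by
  show Nhist a 0 (n+1) (n+1) t = _
  rw [show Nhist a 0 (n+1) (n+1) t = _ from if_neg (by omega)]
  apply Finset.sup'_congr _ rfl
  intro j hj
  simp only [Finset.mem_Icc] at hj
  have : ∀ x : ℝ, Nhist a 0 n (n + 1 - j) x = Nval a 0 (n+1-j) x := by
    intro x; exact nhist_stable a 0 n (n+1-j) x (by omega)
  rw [intervalIntegral.integral_congr (fun x _ => by rw [this x])]
  show a j + (a j * (1 - 0) + 0) * Nstar a 0 (n+1-j) t = _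
  ring

noncomputable def Gf (a : ℕ → ℝ) (n : ℕ) (t : ℝ) : ℝ :=
  Real.exp t + ∫ x in (0:ℝ)..t, Nval a 0 n x * Real.exp x

noncomputable def Df (a : ℕ → ℝ) (n : ℕ) (t : ℝ) : ℝ :=
  Real.exp t * (1 + Nval a 0 n t)

lemma cont_sup' (s : Finset ℕ) (hs : s.Nonempty) (f : ℕ → ℝ → ℝ)
    (hf : ∀ i ∈ s, Continuous (f i)) :
    Continuous (fun t => s.sup' hs (fun i => f i t)) := by
  induction hs using Finset.Nonempty.cons_induction with
  | singleton i => simpa using hf i (by simp)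
  | cons i s hi hs ih =>
      simp only [Finset.sup'_cons hs]
      exact Continuous.max (hf i (by simp)) (ih (fun j hj => hf j (by simp [hj])))

lemma nval_cont (a : ℕ → ℝ) : ∀ n, Continuous (fun t => Nval a 0 n t) := by
  intro n
  induction n using Nat.strong_induction_on with
  | _ n ih =>
    match n with
    | 0 => simpa [nval_zero] using continuous_const
    | (m+1) =>
      have : (fun t => Nval a 0 (m+1) t)
          = fun t => (Finset.Icc 1 (m+1)).sup' (icc_ne m)
            (fun j => a j * (1 + Nstar a 0 (m+1-j) t)) := by
        funext t; exact nval_succ a m t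
      rw [this]
      apply cont_sup'
      intro j hj
      simp only [Finset.mem_Icc] at hj
      have hc : Continuous (fun t => Nval a 0 (m+1-j) t) := ih _ (by omega)
      have hint : Continuous (fun t => ∫ x in (0:ℝ)..t, Nval a 0 (m+1-j) x * Real.exp x) := by
        have : ∀ t : ℝ, HasDerivAt (fun t => ∫ x in (0:ℝ)..t, Nval a 0 (m+1-j) x * Real.exp x)
            (Nval a 0 (m+1-j) t * Real.exp t) t := by
          intro t
          apply intervalIntegral.integral_hasDerivAt_right
          · exact (hc.mul Real.continuous_exp).intervalIntegrable _ _
          · exact (hc.mul Real.continuous_exp).stronglyMeasurableAtFilter _ _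
          · exact (hc.mul Real.continuous_exp).continuousAt
        exact continuous_iff_continuousAt.mpr
          (fun x => (this x).differentiableAt.continuousAt)
      have : Continuous (fun t => Nstar a 0 (m+1-j) t) :=
        ((Real.continuous_exp.comp continuous_neg).mul hint)
      exact (continuous_const.mul (continuous_const.add this))

lemma gf_hasDeriv (a : ℕ → ℝ) (n : ℕ) (t : ℝ) :
    HasDerivAt (fun t => Gf a n t) (Df a n t) t := by
  have hc := nval_cont a n
  have h1 : HasDerivAt (fun t => ∫ x in (0:ℝ)..t, Nval a 0 n x * Real.exp x)
      (Nval a 0 n t * Real.exp t) t := by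
    apply intervalIntegral.integral_hasDerivAt_right
    · exact (hc.mul Real.continuous_exp).intervalIntegrable _ _
    · exact (hc.mul Real.continuous_exp).stronglyMeasurableAtFilter _ _
    · exact (hc.mul Real.continuous_exp).continuousAt
  have := (Real.hasDerivAt_exp t).add h1
  exact this.congr_deriv (by unfold Df; ring)

lemma gf_cont (a : ℕ → ℝ) (n : ℕ) : Continuous (fun t => Gf a n t) := by
  have : ∀ t : ℝ, DifferentiableAt ℝ (fun t => Gf a n t) t :=
    fun t => (gf_hasDeriv a n t).differentiableAt
  exact continuous_iff_continuousAt.mpr (fun x => (this x).continuousAt)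

lemma gf_eq (a : ℕ → ℝ) (n : ℕ) (t : ℝ) :
    Gf a n t = Real.exp t * (1 + Nstar a 0 n t) := by
  unfold Gf Nstar
  rw [mul_add, mul_one, ← mul_assoc, ← Real.exp_add]
  simp

lemma df_cont (a : ℕ → ℝ) (n : ℕ) : Continuous (fun t => Df a n t) :=
  Real.continuous_exp.mul (continuous_const.add (nval_cont a n))

section Hyp
variable {a : ℕ → ℝ}

lemma nstar_zero_fun (a : ℕ → ℝ) (t : ℝ) : Nstar a 0 0 t = 0 := by
  unfold Nstar
  rw [intervalIntegral.integral_congr (g := fun _ => (0:ℝ)) (fun x _ => by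
    rw [nval_zero]; ring)]
  simp

lemma nstar_at_zero (a : ℕ → ℝ) (r : ℕ) : Nstar a 0 r 0 = 0 := by
  unfold Nstar; simp

lemma nval_ge_a (a : ℕ → ℝ) (n : ℕ) (t : ℝ) (ha0 : a 0 = 0) : a n ≤ Nval a 0 n t := by
  match n with
  | 0 => rw [nval_zero, ha0]
  | (m+1) =>
    rw [nval_succ]
    have h : a (m+1) * (1 + Nstar a 0 (m+1-(m+1)) t) = a (m+1) := by
      simp [nstar_zero_fun]
    calc a (m+1) = a (m+1) * (1 + Nstar a 0 (m+1-(m+1)) t) := h.symm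
    _ ≤ _ := Finset.le_sup' (fun j => a j * (1 + Nstar a 0 (m+1-j) t)) (Finset.mem_Icc.mpr ⟨by omega, le_refl _⟩)

lemma nval_nonneg (a : ℕ → ℝ) (n : ℕ) (t : ℝ) (ha0 : a 0 = 0)
    (haI : ∀ j, a j ∈ Set.Icc (0:ℝ) 1) : 0 ≤ Nval a 0 n t :=
  le_trans (haI n).1 (nval_ge_a a n t ha0)

lemma gf_ge_exp (a : ℕ → ℝ) (n : ℕ) {t : ℝ} (ht : 0 ≤ t) (ha0 : a 0 = 0)
    (haI : ∀ j, a j ∈ Set.Icc (0:ℝ) 1) : Real.exp t ≤ Gf a n t := by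
  unfold Gf
  have : 0 ≤ ∫ x in (0:ℝ)..t, Nval a 0 n x * Real.exp x := by
    apply intervalIntegral.integral_nonneg ht
    intro x hx
    exact mul_nonneg (nval_nonneg a n x ha0 haI) (Real.exp_pos x).le
  linarith

lemma gf_pos (a : ℕ → ℝ) (n : ℕ) {t : ℝ} (ht : 0 ≤ t) (ha0 : a 0 = 0)
    (haI : ∀ j, a j ∈ Set.Icc (0:ℝ) 1) : 0 < Gf a n t :=
  lt_of_lt_of_le (Real.exp_pos t) (gf_ge_exp a n ht ha0 haI)

lemma nstar_hasDeriv (a : ℕ → ℝ) (n : ℕ) (t : ℝ) :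
    HasDerivAt (fun t => Nstar a 0 n t) (Nval a 0 n t - Nstar a 0 n t) t := by
  have hc := nval_cont a n
  have h1 : HasDerivAt (fun t => ∫ x in (0:ℝ)..t, Nval a 0 n x * Real.exp x)
      (Nval a 0 n t * Real.exp t) t := by
    apply intervalIntegral.integral_hasDerivAt_right
    · exact (hc.mul Real.continuous_exp).intervalIntegrable _ _
    · exact (hc.mul Real.continuous_exp).stronglyMeasurableAtFilter _ _
    · exact (hc.mul Real.continuous_exp).continuousAt
  have h2 : HasDerivAt (fun t => Real.exp (-t)) (-Real.exp (-t)) t := by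
    exact ((Real.hasDerivAt_exp (-t)).comp t (hasDerivAt_neg t)).congr_deriv (by ring)
  have := h2.mul h1
  have heq : -Real.exp (-t) * (∫ x in (0:ℝ)..t, Nval a 0 n x * Real.exp x)
      + Real.exp (-t) * (Nval a 0 n t * Real.exp t)
      = Nval a 0 n t - Nstar a 0 n t := by
    unfold Nstar
    rw [show Real.exp (-t) * (Nval a 0 n t * Real.exp t)
        = Nval a 0 n t * (Real.exp (-t) * Real.exp t) by ring, ← Real.exp_add]
    simp; ring
  rw [← heq]
  exact this

lemma nstar_cont (a : ℕ → ℝ) (n : ℕ) : Continuous (fun t => Nstar a 0 n t) :=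
  continuous_iff_continuousAt.mpr (fun x => (nstar_hasDeriv a n x).differentiableAt.continuousAt)

lemma nval_mono (ha0 : a 0 = 0) (haI : ∀ j, a j ∈ Set.Icc (0:ℝ) 1) :
    ∀ n, MonotoneOn (fun t => Nval a 0 n t) (Set.Ici 0) ∧
      (∀ t : ℝ, 0 ≤ t → Nstar a 0 n t ≤ (1 - Real.exp (-t)) * Nval a 0 n t) := by
  intro n
  induction n using Nat.strong_induction_on with
  | _ n ih =>
    have hmonoN : MonotoneOn (fun t => Nval a 0 n t) (Set.Ici 0) := by
      match n with
      | 0 => intro s hs t ht hst; simp [nval_zero]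
      | (m+1) =>
        intro s hs t ht hst
        simp only [nval_succ]
        apply Finset.sup'_le
        intro j hj
        simp only [Finset.mem_Icc] at hj
        have hlev : m + 1 - j < m + 1 := by omega
        -- Nstar (m+1-j) is monotone on [0,∞): deriv ≥ 0
        have hstar_mono : MonotoneOn (fun x => Nstar a 0 (m+1-j) x) (Set.Ici 0) := by
          apply monotoneOn_of_deriv_nonneg (convex_Ici 0)
            (nstar_cont a (m+1-j)).continuousOn
            (fun x hx => (nstar_hasDeriv a (m+1-j) x).differentiableAt.differentiableWithinAt)
          intro x hx
          rw [interior_Ici] at hx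
          have hx' : (0:ℝ) < x := hx
          rw [(nstar_hasDeriv a (m+1-j) x).deriv]
          have h1 := (ih _ hlev).2 x (le_of_lt hx)
          have h2 : (1 - Real.exp (-x)) * Nval a 0 (m+1-j) x ≤ Nval a 0 (m+1-j) x := by
            have h3 : Real.exp (-x) ≤ 1 := Real.exp_le_one_iff.mpr (by linarith)
            have h4 := nval_nonneg a (m+1-j) x ha0 haI
            nlinarith [nval_nonneg a (m+1-j) x ha0 haI, (Real.exp_pos (-x)).le]
          linarith
        have : a j * (1 + Nstar a 0 (m+1-j) s) ≤ a j * (1 + Nstar a 0 (m+1-j) t) := by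
          apply mul_le_mul_of_nonneg_left _ (haI j).1
          have := hstar_mono hs ht hst
          linarith
        exact le_trans this (Finset.le_sup'
          (fun j => a j * (1 + Nstar a 0 (m+1-j) t)) (Finset.mem_Icc.mpr hj))
    refine ⟨hmonoN, ?_⟩
    intro t ht
    unfold Nstar
    have hint : (∫ x in (0:ℝ)..t, Nval a 0 n x * Real.exp x)
        ≤ ∫ x in (0:ℝ)..t, Nval a 0 n t * Real.exp x := by
      apply intervalIntegral.integral_mono_on ht
      · exact ((nval_cont a n).mul Real.continuous_exp).intervalIntegrable _ _
      · exact (continuous_const.mul Real.continuous_exp).intervalIntegrable _ _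
      · intro x hx
        have : Nval a 0 n x ≤ Nval a 0 n t := hmonoN hx.1 ht hx.2
        exact mul_le_mul_of_nonneg_right this (Real.exp_pos x).le
    have h2 : ∫ x in (0:ℝ)..t, Nval a 0 n t * Real.exp x
        = Nval a 0 n t * (Real.exp t - 1) := by
      rw [intervalIntegral.integral_const_mul, integral_exp]; simp
    calc Real.exp (-t) * ∫ x in (0:ℝ)..t, Nval a 0 n x * Real.exp x
        ≤ Real.exp (-t) * (Nval a 0 n t * (Real.exp t - 1)) := by
          rw [← h2]; exact mul_le_mul_of_nonneg_left hint (Real.exp_pos (-t)).le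
      _ = (1 - Real.exp (-t)) * Nval a 0 n t := by
          rw [show Real.exp (-t) * (Nval a 0 n t * (Real.exp t - 1))
            = Nval a 0 n t * (Real.exp (-t) * Real.exp t - Real.exp (-t)) by ring,
            ← Real.exp_add]
          simp; ring

lemma df_sub_gf (ha0 : a 0 = 0) (haI : ∀ j, a j ∈ Set.Icc (0:ℝ) 1) (n : ℕ) {t : ℝ}
    (ht : 0 ≤ t) : Nval a 0 n t ≤ Df a n t - Gf a n t := by
  have h1 := (nval_mono ha0 haI n).2 t ht
  rw [gf_eq]
  unfold Df
  have h2 : Df a n t - Real.exp t * (1 + Nstar a 0 n t)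
      = Real.exp t * (Nval a 0 n t - Nstar a 0 n t) := by unfold Df; ring
  have h3 : Real.exp t * (Nval a 0 n t - Nstar a 0 n t)
      ≥ Real.exp t * (Real.exp (-t) * Nval a 0 n t) := by
    apply mul_le_mul_of_nonneg_left _ (Real.exp_pos t).le
    nlinarith [h1]
  rw [show Real.exp t * (Real.exp (-t) * Nval a 0 n t)
      = (Real.exp t * Real.exp (-t)) * Nval a 0 n t by ring, ← Real.exp_add] at h3
  simp at h3
  linarith [h2, h3]

end Hyp

section Hyp2
variable {a : ℕ → ℝ}

lemma gf_zero (a : ℕ → ℝ) (t : ℝ) : Gf a 0 t = Real.exp t := by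
  unfold Gf
  rw [intervalIntegral.integral_congr (g := fun _ => (0:ℝ)) (fun x _ => by
    rw [nval_zero]; ring)]
  simp

lemma df_zero (a : ℕ → ℝ) (t : ℝ) : Df a 0 t = Real.exp t := by
  unfold Df; rw [nval_zero]; ring

lemma gf_at_zero (a : ℕ → ℝ) (n : ℕ) : Gf a n 0 = 1 := by
  unfold Gf; simp

lemma nval_at_zero (a : ℕ → ℝ) (n : ℕ) (ha0 : a 0 = 0) (hmono : StrictMono a) :
    Nval a 0 n 0 = a n := by
  match n with
  | 0 => rw [nval_zero, ha0]
  | (m+1) =>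
    rw [nval_succ]
    simp only [nstar_at_zero, add_zero, mul_one]
    apply le_antisymm
    · apply Finset.sup'_le
      intro j hj
      simp only [Finset.mem_Icc] at hj
      exact hmono.monotone hj.2
    · exact Finset.le_sup' (fun j => a j) (show (m+1) ∈ Finset.Icc 1 (m+1) by simp)

lemma df_succ_sup' (a : ℕ → ℝ) (n : ℕ) (t : ℝ) :
    Df a (n+1) t = (Finset.Icc 1 (n+1)).sup' (icc_ne n)
      (fun j => Real.exp t + a j * Gf a (n+1-j) t) := by
  have key : ∀ j, Real.exp t + a j * Gf a (n+1-j) t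
      = Real.exp t * (1 + a j * (1 + Nstar a 0 (n+1-j) t)) := by
    intro j; rw [gf_eq]; ring
  apply le_antisymm
  · obtain ⟨p, hp, hep⟩ := Finset.exists_mem_eq_sup' (icc_ne n)
      (fun j => a j * (1 + Nstar a 0 (n+1-j) t))
    have : Df a (n+1) t = Real.exp t + a p * Gf a (n+1-p) t := by
      unfold Df; rw [nval_succ, hep, key p]
    rw [this]
    exact Finset.le_sup' (fun j => Real.exp t + a j * Gf a (n+1-j) t) hp
  · apply Finset.sup'_le
    intro j hj
    rw [key j]
    unfold Df
    have h1 : a j * (1 + Nstar a 0 (n+1-j) t) ≤ Nval a 0 (n+1) t := by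
      rw [nval_succ]
      exact Finset.le_sup' (fun j => a j * (1 + Nstar a 0 (n+1-j) t)) hj
    nlinarith [Real.exp_pos t]

lemma df_term_le (a : ℕ → ℝ) {n j : ℕ} (hj : j ∈ Finset.Icc 1 n) (t : ℝ) :
    Real.exp t + a j * Gf a (n-j) t ≤ Df a n t := by
  match n with
  | 0 => exact absurd hj (by simp)
  | (m+1) =>
    rw [df_succ_sup']
    exact Finset.le_sup' (fun j => Real.exp t + a j * Gf a (m+1-j) t) hj

lemma df_attained (a : ℕ → ℝ) {n : ℕ} (hn : 1 ≤ n) (t : ℝ) :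
    ∃ p ∈ Finset.Icc 1 n, Df a n t = Real.exp t + a p * Gf a (n-p) t := by
  match n with
  | (m+1) =>
    obtain ⟨p, hp, hep⟩ := Finset.exists_mem_eq_sup' (icc_ne m)
      (fun j => Real.exp t + a j * Gf a (m+1-j) t)
    exact ⟨p, hp, by rw [df_succ_sup']; exact hep⟩

section loggy
variable (ha0 : a 0 = 0) (hmono : StrictMono a)
  (hconc : ∀ j : ℕ, a (j + 2) - a (j + 1) < a (j + 1) - a j)

include ha0 hmono hconc

lemma diff_strict_anti : ∀ i j : ℕ, i < j → a (j+1) - a j < a (i+1) - a i := by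
  intro i j hij
  induction j with
  | zero => omega
  | succ m ih =>
    rcases Nat.lt_or_ge i m with h | h
    · have := ih h
      have h2 := hconc m
      linarith
    · have : i = m := by omega
      subst this
      exact hconc i

lemma loggy_step {i l : ℕ} (hi : 1 ≤ i) (hil : i + 2 ≤ l) :
    a i * a l < a (i+1) * a (l-1) := by
  have h1 : a l - a (l-1) < a (i+1) - a i := by
    have : l - 1 + 1 = l := by omega
    have h := diff_strict_anti ha0 hmono hconc i (l-1) (by omega)
    rw [this] at h; exact h
  have h2 : 0 < a i := by
    have := hmono (show 0 < i by omega)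
    rw [ha0] at this; exact this
  have h3 : a i ≤ a (l-1) := hmono.monotone (by omega)
  have h4 : 0 < a l - a (l-1) := by
    have : l - 1 < l := by omega
    linarith [hmono this]
  have h5 : 0 ≤ a (i+1) - a i := by linarith [hmono (show i < i+1 by omega)]
  nlinarith

lemma loggy : ∀ (d i j k l : ℕ), j - i = d → 1 ≤ i → i ≤ j → j ≤ k → k ≤ l →
    i + l = j + k → a i * a l ≤ a j * a k := by
  intro d
  induction d with
  | zero =>
    intro i j k l hd hi hij hjk hkl hsum
    have : i = j := by omega
    subst this
    have : k = l := by omega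
    subst this
    exact le_refl _
  | succ d ih =>
    intro i j k l hd hi hij hjk hkl hsum
    have hlt : i < j := by omega
    have hil : i + 2 ≤ l := by omega
    have step := loggy_step ha0 hmono hconc hi hil
    have next := ih (i+1) j k (l-1) (by omega) (by omega) (by omega) hjk (by omega) (by omega)
    linarith

lemma loggy_lt {i j k l : ℕ} (hi : 1 ≤ i) (hij : i < j) (hjk : j ≤ k) (hkl : k ≤ l)
    (hsum : i + l = j + k) : a i * a l < a j * a k := by
  have hil : i + 2 ≤ l := by omega
  have step := loggy_step ha0 hmono hconc hi hil
  have next := loggy ha0 hmono hconc (j - (i+1)) (i+1) j k (l-1) rfl (by omega) (by omega)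
    hjk (by omega) (by omega)
  linarith

lemma a_pos {i : ℕ} (hi : 1 ≤ i) : 0 < a i := by
  have := hmono (show 0 < i by omega)
  rw [ha0] at this; exact this

end loggy
end Hyp2

section Master
variable {a : ℕ → ℝ}

lemma nstar_ge (a : ℕ → ℝ) (n : ℕ) {t : ℝ} (ht : 0 ≤ t) (ha0 : a 0 = 0) :
    a n * (1 - Real.exp (-t)) ≤ Nstar a 0 n t := by
  unfold Nstar
  have hint : (∫ x in (0:ℝ)..t, a n * Real.exp x)
      ≤ ∫ x in (0:ℝ)..t, Nval a 0 n x * Real.exp x := by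
    apply intervalIntegral.integral_mono_on ht
    · exact (continuous_const.mul Real.continuous_exp).intervalIntegrable _ _
    · exact ((nval_cont a n).mul Real.continuous_exp).intervalIntegrable _ _
    · intro x _
      exact mul_le_mul_of_nonneg_right (nval_ge_a a n x ha0) (Real.exp_pos x).le
  have h2 : ∫ x in (0:ℝ)..t, a n * Real.exp x = a n * (Real.exp t - 1) := by
    rw [intervalIntegral.integral_const_mul, integral_exp]; simp
  calc a n * (1 - Real.exp (-t))
      = Real.exp (-t) * (a n * (Real.exp t - 1)) := by
        rw [show Real.exp (-t) * (a n * (Real.exp t - 1))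
          = a n * (Real.exp (-t) * Real.exp t - Real.exp (-t)) by ring, ← Real.exp_add]
        simp only [neg_add_cancel, Real.exp_zero]
    _ ≤ _ := by
        rw [← h2]
        exact mul_le_mul_of_nonneg_left hint (Real.exp_pos (-t)).le

set_option maxHeartbeats 2000000 in
theorem master (ha0 : a 0 = 0) (haI : ∀ j, a j ∈ Set.Icc (0:ℝ) 1) (hmono : StrictMono a)
    (hconc : ∀ j : ℕ, a (j + 2) - a (j + 1) < a (j + 1) - a j) :
    ∀ M m', m' ≤ M → ∀ t : ℝ, 0 ≤ t → Df a m' t * Gf a M t ≤ Df a M t * Gf a m' t := by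
  intro M
  induction M using Nat.strong_induction_on with
  | _ M ih =>
    intro m' hm'M t ht
    rcases eq_or_lt_of_le hm'M with rfl | hlt
    · exact le_refl _
    rcases Nat.eq_zero_or_pos m' with rfl | hm'1
    · -- m' = 0 : Gf M ≤ Df M
      rw [df_zero, gf_zero]
      have h1 := df_sub_gf ha0 haI M ht
      have h2 := nval_nonneg a M t ha0 haI
      nlinarith [Real.exp_pos t]
    -- main case 1 ≤ m' < M
    revert t ht
    by_contra hcon
    push_neg at hcon
    obtain ⟨t1, ht1, hbad⟩ := hcon
    set Th : ℝ → ℝ := fun t => Df a M t * Gf a m' t - Df a m' t * Gf a M t with hTh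
    have hTh_cont : Continuous Th :=
      ((df_cont a M).mul (gf_cont a m')).sub ((df_cont a m').mul (gf_cont a M))
    set S : Set ℝ := {t | 0 ≤ t ∧ Th t < 0} with hS
    have hSne : S.Nonempty := ⟨t1, ht1, by simp only [hTh]; linarith⟩
    have hbdd : BddBelow S := ⟨0, fun s hs => hs.1⟩
    set t0 : ℝ := sInf S with ht0def
    have ht0_ge : 0 ≤ t0 := le_csInf hSne (fun s hs => hs.1)
    have ht0_le : ∀ s ∈ S, t0 ≤ s := fun s hs => csInf_le hbdd hs
    have hTh0 : 0 < Th 0 := by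
      simp only [hTh]
      unfold Df
      rw [nval_at_zero a M ha0 hmono, nval_at_zero a m' ha0 hmono,
        gf_at_zero, gf_at_zero]
      simp only [Real.exp_zero]
      have := hmono hlt
      linarith
    have hTnonneg : ∀ s, 0 ≤ s → s < t0 → 0 ≤ Th s := by
      intro s hs hst
      by_contra h
      push_neg at h
      exact absurd (ht0_le s ⟨hs, h⟩) (by linarith)
    have hTz_le : Th t0 ≤ 0 := by
      by_contra h
      push_neg at h
      have : {t : ℝ | 0 < Th t} ∈ 𝓝 t0 :=
        (isOpen_lt continuous_const hTh_cont).mem_nhds h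
      obtain ⟨ε, hε, hball⟩ := Metric.mem_nhds_iff.mp this
      obtain ⟨s, hsS, hslt⟩ := exists_lt_of_csInf_lt hSne
        (lt_of_eq_of_lt ht0def.symm (show t0 < t0 + ε by linarith))
      have h1 : t0 ≤ s := ht0_le s hsS
      have h2 : s ∈ Metric.ball t0 ε := by
        rw [Metric.mem_ball, Real.dist_eq, abs_of_nonneg (by linarith)]
        linarith
      exact absurd (hball h2) (by simp; linarith [hsS.2])
    have ht0_pos : 0 < t0 := by
      rcases eq_or_lt_of_le ht0_ge with h | h
      · exfalso; rw [← h] at hTz_le; linarith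
      · exact h
    have hTz_ge : 0 ≤ Th t0 := by
      by_contra h
      push_neg at h
      have : {t : ℝ | Th t < 0} ∈ 𝓝 t0 :=
        (isOpen_lt hTh_cont continuous_const).mem_nhds h
      obtain ⟨ε, hε, hball⟩ := Metric.mem_nhds_iff.mp this
      set s := t0 - min ε t0 / 2 with hsdef
      have hs0 : 0 ≤ s := by
        simp only [hsdef]
        have : min ε t0 ≤ t0 := min_le_right _ _
        linarith
      have hsball : s ∈ Metric.ball t0 ε := by
        rw [Metric.mem_ball, Real.dist_eq]
        have h1 : min ε t0 ≤ ε := min_le_left _ _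
        have h2 : 0 < min ε t0 := lt_min hε ht0_pos
        rw [abs_of_nonpos (by simp only [hsdef]; linarith)]
        simp only [hsdef]; linarith
      have hsS : s ∈ S := ⟨hs0, hball hsball⟩
      have := ht0_le s hsS
      have h2 : 0 < min ε t0 := lt_min hε ht0_pos
      simp only [hsdef] at this; linarith
    have hTz : Th t0 = 0 := le_antisymm hTz_le hTz_ge
    -- setup at t0
    obtain ⟨p, hpmem, hp_eq⟩ := df_attained a (show 1 ≤ M by omega) t0
    simp only [Finset.mem_Icc] at hpmem
    have hTzz : Df a M t0 * Gf a m' t0 = Df a m' t0 * Gf a M t0 := by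
      have : Th t0 = Df a M t0 * Gf a m' t0 - Df a m' t0 * Gf a M t0 := rfl
      linarith [hTz, this.symm.le]
    -- the eventual positivity claims
    have hev : ∀ q ∈ Finset.Icc 1 m', ∀ᶠ t in 𝓝[>] t0,
        0 < (Real.exp t + a p * Gf a (M - p) t) * Gf a m' t
          - (Real.exp t + a q * Gf a (m' - q) t) * Gf a M t := by
      intro q hqmem
      simp only [Finset.mem_Icc] at hqmem
      have hFq_le : Real.exp t0 + a q * Gf a (m' - q) t0 ≤ Df a m' t0 :=
        df_term_le a (Finset.mem_Icc.mpr hqmem) t0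
      have hθcont : Continuous (fun t => (Real.exp t + a p * Gf a (M - p) t) * Gf a m' t
          - (Real.exp t + a q * Gf a (m' - q) t) * Gf a M t) :=
        ((Real.continuous_exp.add (continuous_const.mul (gf_cont a (M - p)))).mul
          (gf_cont a m')).sub
          ((Real.continuous_exp.add (continuous_const.mul (gf_cont a (m' - q)))).mul
          (gf_cont a M))
      rcases lt_or_eq_of_le hFq_le with hstrict | hattain
      · -- non-argmax q : value strictly positive at t0, conclude by openness
        have hθ0 : 0 < (Real.exp t0 + a p * Gf a (M - p) t0) * Gf a m' t0
            - (Real.exp t0 + a q * Gf a (m' - q) t0) * Gf a M t0 := by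
          rw [← hp_eq]
          have h3 : 0 < Gf a M t0 := gf_pos a M ht0_ge ha0 haI
          nlinarith [hstrict, h3, hTzz]
        have hmemn : {t : ℝ | 0 < (Real.exp t + a p * Gf a (M - p) t) * Gf a m' t
            - (Real.exp t + a q * Gf a (m' - q) t) * Gf a M t} ∈ 𝓝 t0 :=
          (isOpen_lt continuous_const hθcont).mem_nhds hθ0
        exact nhdsWithin_le_nhds hmemn
      · -- q attains the max at t0
        by_cases hPQ : p = M ∧ q = m'
        · -- impossible configuration
          exfalso
          obtain ⟨hpM, hqm⟩ := hPQ
          have e1 : Df a M t0 = Real.exp t0 * (1 + a M) := by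
            rw [hp_eq, hpM, Nat.sub_self, gf_zero]; ring
          have e2 : Df a m' t0 = Real.exp t0 * (1 + a m') := by
            rw [← hattain, hqm, Nat.sub_self, gf_zero]; ring
          have hNM : Nval a 0 M t0 = a M := by
            have h := e1
            unfold Df at h
            have hne : Real.exp t0 ≠ 0 := (Real.exp_pos t0).ne'
            have := mul_left_cancel₀ hne h
            linarith
          have h1 : Nstar a 0 M t0 ≤ (1 - Real.exp (-t0)) * a M := by
            have := (nval_mono ha0 haI M).2 t0 ht0_ge
            rw [hNM] at this; exact this
          have h2 : a m' * (1 - Real.exp (-t0)) ≤ Nstar a 0 m' t0 :=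
            nstar_ge a m' ht0_ge ha0
          have hG1 : Gf a m' t0 = Real.exp t0 * (1 + Nstar a 0 m' t0) := gf_eq a m' t0
          have hG2 : Gf a M t0 = Real.exp t0 * (1 + Nstar a 0 M t0) := gf_eq a M t0
          rw [e1, e2, hG1, hG2] at hTzz
          have hne2 : Real.exp t0 ^ 2 ≠ 0 := pow_ne_zero 2 (Real.exp_pos t0).ne'
          have hcan : (1 + a M) * (1 + Nstar a 0 m' t0)
              = (1 + a m') * (1 + Nstar a 0 M t0) := by
            apply mul_left_cancel₀ hne2
            linear_combination hTzz
          have hβ : 0 < Real.exp (-t0) := Real.exp_pos _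
          have hβ1 : Real.exp (-t0) < 1 := Real.exp_lt_one_iff.mpr (by linarith)
          have haMm' : a m' < a M := hmono hlt
          have haM1 : a M ≤ 1 := (haI M).2
          have ham0 : 0 ≤ a m' := (haI m').1
          nlinarith [hcan, h1, h2, hβ, hβ1, haMm', haM1, ham0]
        · -- genuine derivative case
          have hgap : 1 ≤ M - m' := by omega
          have hG2pos : 0 < Gf a (m' - q) t0 := gf_pos a (m' - q) ht0_ge ha0 haI
          have hG1pos : 0 < Gf a (M - p) t0 := gf_pos a (M - p) ht0_ge ha0 haI
          have hGm'pos : 0 < Gf a m' t0 := gf_pos a m' ht0_ge ha0 haI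
          have hGMpos : 0 < Gf a M t0 := gf_pos a M ht0_ge ha0 haI
          have hE : 0 < Real.exp t0 := Real.exp_pos t0
          -- optimality of p against index q + (M - m')
          have hj1mem : q + (M - m') ∈ Finset.Icc 1 M := Finset.mem_Icc.mpr ⟨by omega, by omega⟩
          have hk1 : a (q + (M - m')) * Gf a (m' - q) t0 ≤ a p * Gf a (M - p) t0 := by
            have h1 := df_term_le a hj1mem t0
            rw [hp_eq, show M - (q + (M - m')) = m' - q by omega] at h1
            linarith
          -- exclusion : p ≤ q + (M - m')
          have hple : p ≤ q + (M - m') := by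
            by_contra hgt
            push_neg at hgt
            have hi1mem : p - (M - m') ∈ Finset.Icc 1 m' :=
              Finset.mem_Icc.mpr ⟨by omega, by omega⟩
            have hk2 : a (p - (M - m')) * Gf a (M - p) t0 ≤ a q * Gf a (m' - q) t0 := by
              have h2 := df_term_le a hi1mem t0
              rw [← hattain, show m' - (p - (M - m')) = M - p by omega] at h2
              linarith
            have hnn1 : 0 ≤ a (q + (M - m')) * Gf a (m' - q) t0 :=
              mul_nonneg (haI _).1 hG2pos.le
            have hnn2 : 0 ≤ a p * Gf a (M - p) t0 := mul_nonneg (haI _).1 hG1pos.le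
            have k3 := mul_le_mul hk1 hk2 (mul_nonneg (haI _).1 hG1pos.le) hnn2
            have k4 : a (q + (M - m')) * a (p - (M - m')) ≤ a p * a q := by
              have hGG : 0 < Gf a (m' - q) t0 * Gf a (M - p) t0 := mul_pos hG2pos hG1pos
              nlinarith [k3, hGG]
            rcases le_total (q + (M - m')) (p - (M - m')) with hc | hc
            · have := loggy_lt ha0 hmono hconc (i := q) (j := q + (M - m'))
                (k := p - (M - m')) (l := p) hqmem.1 (by omega) hc (by omega) (by omega)
              nlinarith [k4, this]
            · have := loggy_lt ha0 hmono hconc (i := q) (j := p - (M - m'))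
                (k := q + (M - m')) (l := p) hqmem.1 (by omega) hc (by omega) (by omega)
              nlinarith [k4, this]
          have hl2le : m' - q ≤ M - p := by omega
          have hB := ih (M - p) (by omega) (m' - q) hl2le t0 ht0_ge
          have hrel : (Real.exp t0 + a p * Gf a (M - p) t0) * Gf a m' t0
              = (Real.exp t0 + a q * Gf a (m' - q) t0) * Gf a M t0 := by
            rw [← hp_eq, hattain]; exact hTzz
          have hcancel : (Real.exp t0 + a p * Gf a (M - p) t0) * Df a m' t0
              = (Real.exp t0 + a q * Gf a (m' - q) t0) * Df a M t0 := by
            rw [← hp_eq, hattain]; exact mul_comm _ _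
          -- derivative
          have hd1 : HasDerivAt (fun t => Real.exp t + a p * Gf a (M - p) t)
              (Real.exp t0 + a p * Df a (M - p) t0) t0 :=
            (Real.hasDerivAt_exp t0).add ((gf_hasDeriv a (M - p) t0).const_mul (a p))
          have hd2 : HasDerivAt (fun t => Real.exp t + a q * Gf a (m' - q) t)
              (Real.exp t0 + a q * Df a (m' - q) t0) t0 :=
            (Real.hasDerivAt_exp t0).add ((gf_hasDeriv a (m' - q) t0).const_mul (a q))
          have hdθ : HasDerivAt (fun t => (Real.exp t + a p * Gf a (M - p) t) * Gf a m' t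
              - (Real.exp t + a q * Gf a (m' - q) t) * Gf a M t)
              (((Real.exp t0 + a p * Df a (M - p) t0) * Gf a m' t0
                + (Real.exp t0 + a p * Gf a (M - p) t0) * Df a m' t0)
                - ((Real.exp t0 + a q * Df a (m' - q) t0) * Gf a M t0
                + (Real.exp t0 + a q * Gf a (m' - q) t0) * Df a M t0)) t0 :=
            (hd1.mul (gf_hasDeriv a m' t0)).sub (hd2.mul (gf_hasDeriv a M t0))
          -- positivity of the derivative
          have hDtail : 0 < (Real.exp t0 + a p * Df a (M - p) t0) * Gf a m' t0
              - (Real.exp t0 + a q * Df a (m' - q) t0) * Gf a M t0 := by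
            rcases Nat.eq_zero_or_pos (m' - q) with hq0 | hq1
            · -- q = m', hence p ≠ M and M - p ≥ 1
              have hqm : q = m' := by omega
              have hpM : p ≠ M := fun h => hPQ ⟨h, hqm⟩
              have hl1pos : 1 ≤ M - p := by omega
              rw [hq0, df_zero]
              rw [hq0, gf_zero] at hrel
              have hdfg := df_sub_gf ha0 haI (M - p) ht0_ge
              have hge := nval_ge_a a (M - p) t0 ha0
              have hap : 0 < a p := a_pos ha0 hmono hconc hpmem.1
              have hal : 0 < a (M - p) := a_pos ha0 hmono hconc hl1pos
              nlinarith [hrel, mul_pos (mul_pos hap hGm'pos)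
                (show (0:ℝ) < Df a (M - p) t0 - Gf a (M - p) t0 by linarith)]
            · -- 1 ≤ m' - q ≤ M - p
              have hl1pos : 1 ≤ M - p := le_trans hq1 hl2le
              have hap : 0 < a p := a_pos ha0 hmono hconc hpmem.1
              have haq : 0 < a q := a_pos ha0 hmono hconc hqmem.1
              have hDG2 : 0 < Df a (m' - q) t0 - Gf a (m' - q) t0 := by
                have := df_sub_gf ha0 haI (m' - q) ht0_ge
                have := nval_ge_a a (m' - q) t0 ha0
                have := a_pos ha0 hmono hconc hq1
                linarith
              have hDG1 : 0 < Df a (M - p) t0 - Gf a (M - p) t0 := by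
                have := df_sub_gf ha0 haI (M - p) ht0_ge
                have := nval_ge_a a (M - p) t0 ha0
                have := a_pos ha0 hmono hconc hl1pos
                linarith
              have hα : a q * Gf a (m' - q) t0 < a p * Gf a (M - p) t0 := by
                have haq2 : a q < a (q + (M - m')) := hmono (by omega)
                nlinarith [hk1, hG2pos]
              have hB' : (Df a (m' - q) t0 - Gf a (m' - q) t0) * Gf a (M - p) t0
                  ≤ (Df a (M - p) t0 - Gf a (M - p) t0) * Gf a (m' - q) t0 := by
                nlinarith [hB]
              have key1 : a q * (Df a (m' - q) t0 - Gf a (m' - q) t0)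
                  < a p * (Df a (M - p) t0 - Gf a (M - p) t0) := by
                have t1 : a p * ((Df a (m' - q) t0 - Gf a (m' - q) t0) * Gf a (M - p) t0)
                    ≤ a p * ((Df a (M - p) t0 - Gf a (M - p) t0) * Gf a (m' - q) t0) :=
                  mul_le_mul_of_nonneg_left hB' hap.le
                have t2 : (a q * Gf a (m' - q) t0) * (Df a (m' - q) t0 - Gf a (m' - q) t0)
                    < (a p * Gf a (M - p) t0) * (Df a (m' - q) t0 - Gf a (m' - q) t0) :=
                  mul_lt_mul_of_pos_right hα hDG2
                have hmain : (a q * (Df a (m' - q) t0 - Gf a (m' - q) t0)) * Gf a (m' - q) t0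
                    < (a p * (Df a (M - p) t0 - Gf a (M - p) t0)) * Gf a (m' - q) t0 := by
                  nlinarith [t1, t2]
                exact lt_of_mul_lt_mul_right hmain hG2pos.le
              have inner : (Real.exp t0 + a q * Df a (m' - q) t0)
                    * (Real.exp t0 + a p * Gf a (M - p) t0)
                  < (Real.exp t0 + a p * Df a (M - p) t0)
                    * (Real.exp t0 + a q * Gf a (m' - q) t0) := by
                nlinarith [mul_pos hE (show (0:ℝ) < a p * (Df a (M - p) t0 - Gf a (M - p) t0)
                    - a q * (Df a (m' - q) t0 - Gf a (m' - q) t0) by linarith),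
                  mul_nonneg (mul_nonneg hap.le haq.le) (sub_nonneg.mpr hB')]
              -- transfer through hrel
              have hFq2pos : 0 < Real.exp t0 + a q * Gf a (m' - q) t0 := by positivity
              by_contra hno
              push_neg at hno
              have hzero : (Real.exp t0 + a p * Gf a (M - p) t0) * Gf a m' t0
                  - (Real.exp t0 + a q * Gf a (m' - q) t0) * Gf a M t0 = 0 := by
                rw [hrel]; ring
              have hexpand : (Real.exp t0 + a q * Gf a (m' - q) t0)
                    * ((Real.exp t0 + a p * Df a (M - p) t0) * Gf a m' t0
                      - (Real.exp t0 + a q * Df a (m' - q) t0) * Gf a M t0)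
                  = Gf a m' t0 * ((Real.exp t0 + a p * Df a (M - p) t0)
                      * (Real.exp t0 + a q * Gf a (m' - q) t0)
                      - (Real.exp t0 + a q * Df a (m' - q) t0)
                      * (Real.exp t0 + a p * Gf a (M - p) t0))
                    + (Real.exp t0 + a q * Df a (m' - q) t0)
                      * ((Real.exp t0 + a p * Gf a (M - p) t0) * Gf a m' t0
                        - (Real.exp t0 + a q * Gf a (m' - q) t0) * Gf a M t0) := by
                ring
              rw [hzero, mul_zero, add_zero] at hexpand
              have hrhs : 0 < Gf a m' t0 * ((Real.exp t0 + a p * Df a (M - p) t0)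
                  * (Real.exp t0 + a q * Gf a (m' - q) t0)
                  - (Real.exp t0 + a q * Df a (m' - q) t0)
                  * (Real.exp t0 + a p * Gf a (M - p) t0)) :=
                mul_pos hGm'pos (sub_pos.mpr inner)
              nlinarith [hexpand, hrhs, hFq2pos, hno]
          have hD : 0 < ((Real.exp t0 + a p * Df a (M - p) t0) * Gf a m' t0
                + (Real.exp t0 + a p * Gf a (M - p) t0) * Df a m' t0)
                - ((Real.exp t0 + a q * Df a (m' - q) t0) * Gf a M t0
                + (Real.exp t0 + a q * Gf a (m' - q) t0) * Df a M t0) := by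
            linarith [hcancel, hDtail]
          -- value zero at t0
          have hθ0 : (Real.exp t0 + a p * Gf a (M - p) t0) * Gf a m' t0
              - (Real.exp t0 + a q * Gf a (m' - q) t0) * Gf a M t0 = 0 := by
            rw [hrel]; ring
          -- slope argument
          have hslope := (hasDerivAt_iff_tendsto_slope.mp hdθ).eventually (lt_mem_nhds hD)
          have hmono' : (𝓝[>] t0) ≤ (𝓝[≠] t0) :=
            nhdsWithin_mono _ (fun x hx => ne_of_gt hx)
          have hcomb := (hslope.filter_mono hmono').and
            (eventually_mem_nhdsWithin (s := Set.Ioi t0))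
          refine hcomb.mono ?_
          rintro t ⟨hsl, hti⟩
          have htpos : 0 < t - t0 := sub_pos.mpr hti
          rw [slope_def_field] at hsl
          rw [hθ0] at hsl
          have := mul_pos hsl htpos
          rw [div_mul_cancel₀] at this
          · simpa using this
          · exact htpos.ne'
    -- combine over the finitely many q and contradict minimality of t0
    have hall : ∀ᶠ t in 𝓝[>] t0, ∀ q ∈ Finset.Icc 1 m',
        0 < (Real.exp t + a p * Gf a (M - p) t) * Gf a m' t
          - (Real.exp t + a q * Gf a (m' - q) t) * Gf a M t :=
      (Finset.eventually_all _).mpr hev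
    have hmem : ∀ᶠ t in 𝓝[>] t0, t0 < t := eventually_mem_nhdsWithin
    have hfinal : ∀ᶠ t in 𝓝[>] t0, 0 < Th t := by
      filter_upwards [hall, hmem] with t hq ht
      have ht0' : (0:ℝ) ≤ t := by linarith
      obtain ⟨qt, hqtmem, hqt⟩ := df_attained a (show 1 ≤ m' by omega) t
      have h1 := hq qt hqtmem
      have h2 : Real.exp t + a p * Gf a (M - p) t ≤ Df a M t :=
        df_term_le a (Finset.mem_Icc.mpr hpmem) t
      have h3 : 0 < Gf a m' t := gf_pos a m' ht0' ha0 haI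
      have h4 : Th t = Df a M t * Gf a m' t - Df a m' t * Gf a M t := rfl
      rw [h4, hqt]
      nlinarith [h1, h2, h3]
    obtain ⟨u, hu, hsub⟩ := mem_nhdsGT_iff_exists_Ioo_subset.mp hfinal
    obtain ⟨s, hsS, hslt⟩ := exists_lt_of_csInf_lt hSne (lt_of_eq_of_lt ht0def.symm hu)
    have hst0 : t0 ≤ s := ht0_le s hsS
    have hsne : s ≠ t0 := by
      intro h
      have := hsS.2
      rw [h, hTz] at this
      exact lt_irrefl 0 this
    have hsIoo : s ∈ Set.Ioo t0 u := ⟨lt_of_le_of_ne hst0 (Ne.symm hsne), hslt⟩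
    have := hsub hsIoo
    have h5 := hsS.2
    simp only [Set.mem_setOf_eq] at this
    linarith

end Master

section Final
variable {a : ℕ → ℝ}

lemma gf_cross (ha0 : a 0 = 0) (haI : ∀ j, a j ∈ Set.Icc (0:ℝ) 1) (hmono : StrictMono a)
    (hconc : ∀ j : ℕ, a (j + 2) - a (j + 1) < a (j + 1) - a j)
    {M m' : ℕ} (hm : m' ≤ M) {s t : ℝ} (hs : 0 ≤ s) (hst : s ≤ t) :
    Gf a M s * Gf a m' t ≤ Gf a M t * Gf a m' s := by
  have ht : 0 ≤ t := le_trans hs hst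
  have hratio : MonotoneOn (fun x => Gf a M x / Gf a m' x) (Set.Ici 0) := by
    apply monotoneOn_of_deriv_nonneg (convex_Ici 0)
    · exact ContinuousOn.div (gf_cont a M).continuousOn (gf_cont a m').continuousOn
        (fun x hx => (gf_pos a m' hx ha0 haI).ne')
    · intro x hx
      rw [interior_Ici] at hx
      have hd := (gf_hasDeriv a M x).div (gf_hasDeriv a m' x)
        (gf_pos a m' (le_of_lt hx) ha0 haI).ne'
      exact hd.differentiableAt.differentiableWithinAt
    · intro x hx
      rw [interior_Ici] at hx
      have hx' : (0:ℝ) ≤ x := le_of_lt hx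
      have hd := (gf_hasDeriv a M x).div (gf_hasDeriv a m' x)
        (gf_pos a m' hx' ha0 haI).ne'
      rw [show (fun x => Gf a M x / Gf a m' x) = ((fun t => Gf a M t) / fun t => Gf a m' t) from rfl, hd.deriv]
      have hmas := master ha0 haI hmono hconc M m' hm x hx'
      have hden : 0 < Gf a m' x ^ 2 := pow_pos (gf_pos a m' hx' ha0 haI) 2
      apply div_nonneg _ hden.le
      linarith
  have h1 := hratio (Set.mem_Ici.mpr hs) (Set.mem_Ici.mpr ht) hst
  simp only at h1
  rw [div_le_div_iff₀ (gf_pos a m' hs ha0 haI) (gf_pos a m' ht ha0 haI)] at h1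
  linarith

lemma one_add_nstar (a : ℕ → ℝ) (m : ℕ) (x : ℝ) :
    1 + Nstar a 0 m x = Real.exp (-x) * Gf a m x := by
  rw [gf_eq, ← mul_assoc, ← Real.exp_add]
  simp

lemma nval_term_le (a : ℕ → ℝ) {n j : ℕ} (hj : j ∈ Finset.Icc 1 n) (x : ℝ) :
    a j * (1 + Nstar a 0 (n - j) x) ≤ Nval a 0 n x := by
  match n with
  | 0 => exact absurd hj (by simp)
  | (m+1) =>
    rw [nval_succ]
    exact Finset.le_sup' (fun j => a j * (1 + Nstar a 0 (m+1-j) x)) hj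

lemma nval_attained (a : ℕ → ℝ) {n : ℕ} (hn : 1 ≤ n) (x : ℝ) :
    ∃ p ∈ Finset.Icc 1 n, Nval a 0 n x = a p * (1 + Nstar a 0 (n - p) x) := by
  match n with
  | (m+1) =>
    obtain ⟨p, hp, hep⟩ := Finset.exists_mem_eq_sup' (icc_ne m)
      (fun j => a j * (1 + Nstar a 0 (m+1-j) x))
    exact ⟨p, hp, by rw [nval_succ]; exact hep⟩

lemma nval_cross (ha0 : a 0 = 0) (haI : ∀ j, a j ∈ Set.Icc (0:ℝ) 1) (hmono : StrictMono a)
    (hconc : ∀ j : ℕ, a (j + 2) - a (j + 1) < a (j + 1) - a j)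
    (k : ℕ) (hk : 1 ≤ k) {s t : ℝ} (hs : 0 ≤ s) (hst : s ≤ t) :
    Nval a 0 (k+1) s * Nval a 0 k t ≤ Nval a 0 (k+1) t * Nval a 0 k s := by
  have ht : 0 ≤ t := le_trans hs hst
  obtain ⟨p, hpmem, hp⟩ := nval_attained a (show 1 ≤ k+1 by omega) s
  obtain ⟨q, hqmem, hq⟩ := nval_attained a hk t
  simp only [Finset.mem_Icc] at hpmem hqmem
  have hEs : 0 < Real.exp (-s) := Real.exp_pos _
  have hEt : 0 < Real.exp (-t) := Real.exp_pos _
  rcases le_or_gt p q with hpq | hqp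
  · -- same indices, use supermodularity of Gf
    have hlev : k - q ≤ k + 1 - p := by omega
    have hcr := gf_cross ha0 haI hmono hconc hlev hs hst
    have hub1 : a p * (1 + Nstar a 0 (k+1-p) t) ≤ Nval a 0 (k+1) t :=
      nval_term_le a (Finset.mem_Icc.mpr ⟨hpmem.1, hpmem.2⟩) t
    have hub2 : a q * (1 + Nstar a 0 (k-q) s) ≤ Nval a 0 k s :=
      nval_term_le a (Finset.mem_Icc.mpr ⟨hqmem.1, hqmem.2⟩) s
    rw [hp, hq]
    have hNt : 0 ≤ Nval a 0 k t := nval_nonneg a k t ha0 haI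
    have hNs1 : 0 ≤ a p * (1 + Nstar a 0 (k+1-p) s) := by
      rw [← hp]; exact nval_nonneg a (k+1) s ha0 haI
    calc (a p * (1 + Nstar a 0 (k+1-p) s)) * (a q * (1 + Nstar a 0 (k-q) t))
        = (a p * a q) * ((Real.exp (-s) * Gf a (k+1-p) s) * (Real.exp (-t) * Gf a (k-q) t)) := by
          rw [one_add_nstar, one_add_nstar]; ring
      _ ≤ (a p * a q) * ((Real.exp (-t) * Gf a (k+1-p) t) * (Real.exp (-s) * Gf a (k-q) s)) := by
          apply mul_le_mul_of_nonneg_left _ (mul_nonneg (haI p).1 (haI q).1)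
          have h := mul_le_mul_of_nonneg_left hcr (mul_pos hEs hEt).le
          calc Real.exp (-s) * Gf a (k+1-p) s * (Real.exp (-t) * Gf a (k-q) t)
              = (Real.exp (-s) * Real.exp (-t)) * (Gf a (k+1-p) s * Gf a (k-q) t) := by ring
            _ ≤ (Real.exp (-s) * Real.exp (-t)) * (Gf a (k+1-p) t * Gf a (k-q) s) := h
            _ = Real.exp (-t) * Gf a (k+1-p) t * (Real.exp (-s) * Gf a (k-q) s) := by ring
      _ = (a p * (1 + Nstar a 0 (k+1-p) t)) * (a q * (1 + Nstar a 0 (k-q) s)) := by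
          rw [one_add_nstar, one_add_nstar]; ring
      _ ≤ Nval a 0 (k+1) t * (a q * (1 + Nstar a 0 (k-q) s)) := by
          apply mul_le_mul_of_nonneg_right hub1
          rw [one_add_nstar]
          exact mul_nonneg (haI q).1 (mul_pos hEs (gf_pos a (k-q) hs ha0 haI)).le
      _ ≤ Nval a 0 (k+1) t * Nval a 0 k s := by
          apply mul_le_mul_of_nonneg_left hub2
          linarith [nval_nonneg a (k+1) t ha0 haI]
  · -- exchanged indices, use log-concavity of a
    have hq1 : q + 1 ∈ Finset.Icc 1 (k+1) := Finset.mem_Icc.mpr ⟨by omega, by omega⟩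
    have hp1 : p - 1 ∈ Finset.Icc 1 k := Finset.mem_Icc.mpr ⟨by omega, by omega⟩
    have hub1 : a (q+1) * (1 + Nstar a 0 (k+1-(q+1)) t) ≤ Nval a 0 (k+1) t :=
      nval_term_le a hq1 t
    have hub2 : a (p-1) * (1 + Nstar a 0 (k-(p-1)) s) ≤ Nval a 0 k s := nval_term_le a hp1 s
    rw [show k + 1 - (q+1) = k - q by omega] at hub1
    rw [show k - (p-1) = k + 1 - p by omega] at hub2
    have hloggy : a q * a p ≤ a (q+1) * a (p-1) := by
      rcases le_total (q+1) (p-1) with hc | hc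
      · exact loggy ha0 hmono hconc ((q+1) - q) q (q+1) (p-1) p rfl hqmem.1 (by omega) hc
          (by omega) (by omega)
      · have := loggy ha0 hmono hconc ((p-1) - q) q (p-1) (q+1) p rfl hqmem.1 (by omega) hc
          (by omega) (by omega)
        linarith
    rw [hp, hq]
    have hP1 : 0 < 1 + Nstar a 0 (k+1-p) s := by
      rw [one_add_nstar]; exact mul_pos hEs (gf_pos a (k+1-p) hs ha0 haI)
    have hP2 : 0 < 1 + Nstar a 0 (k-q) t := by
      rw [one_add_nstar]; exact mul_pos hEt (gf_pos a (k-q) ht ha0 haI)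
    calc (a p * (1 + Nstar a 0 (k+1-p) s)) * (a q * (1 + Nstar a 0 (k-q) t))
        = (a q * a p) * ((1 + Nstar a 0 (k+1-p) s) * (1 + Nstar a 0 (k-q) t)) := by ring
      _ ≤ (a (q+1) * a (p-1)) * ((1 + Nstar a 0 (k+1-p) s) * (1 + Nstar a 0 (k-q) t)) := by
          apply mul_le_mul_of_nonneg_right hloggy
          exact (mul_pos hP1 hP2).le
      _ = (a (q+1) * (1 + Nstar a 0 (k-q) t)) * (a (p-1) * (1 + Nstar a 0 (k+1-p) s)) := by
          ring
      _ ≤ Nval a 0 (k+1) t * (a (p-1) * (1 + Nstar a 0 (k+1-p) s)) := by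
          apply mul_le_mul_of_nonneg_right hub1
          exact mul_nonneg (haI (p-1)).1 hP1.le
      _ ≤ Nval a 0 (k+1) t * Nval a 0 k s := by
          apply mul_le_mul_of_nonneg_left hub2
          linarith [nval_nonneg a (k+1) t ha0 haI]

lemma nval_pos (ha0 : a 0 = 0) (hmono : StrictMono a) {n : ℕ} (hn : 1 ≤ n) (x : ℝ) :
    0 < Nval a 0 n x := by
  have h1 : 0 < a n := by
    have := hmono (show 0 < n by omega); rw [ha0] at this; exact this
  linarith [nval_ge_a a n x ha0]

end Final

section Assemble
variable {a : ℕ → ℝ}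

lemma nstar_pos (ha0 : a 0 = 0) (hmono : StrictMono a) {n : ℕ} (hn : 1 ≤ n) {x : ℝ}
    (hx : 0 < x) : 0 < Nstar a 0 n x := by
  have h1 : 0 < a n := by
    have := hmono (show 0 < n by omega); rw [ha0] at this; exact this
  have h2 : Real.exp (-x) < 1 := Real.exp_lt_one_iff.mpr (by linarith)
  have := nstar_ge a n (le_of_lt hx) ha0
  nlinarith

lemma intI_eq (a : ℕ → ℝ) (n : ℕ) (x : ℝ) :
    (∫ y in (0:ℝ)..x, Nval a 0 n y * Real.exp y) = Real.exp x * Nstar a 0 n x := by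
  unfold Nstar
  rw [← mul_assoc, ← Real.exp_add]
  simp

lemma intI_pos (ha0 : a 0 = 0) (hmono : StrictMono a) {n : ℕ} (hn : 1 ≤ n) {x : ℝ}
    (hx : 0 < x) : 0 < ∫ y in (0:ℝ)..x, Nval a 0 n y * Real.exp y := by
  rw [intI_eq]
  exact mul_pos (Real.exp_pos x) (nstar_pos ha0 hmono hn hx)

theorem frail_ratio_monotone'
    (ha0 : a 0 = 0) (haI : ∀ j, a j ∈ Set.Icc (0:ℝ) 1)
    (hmono : StrictMono a)
    (hconc : ∀ j : ℕ, a (j + 2) - a (j + 1) < a (j + 1) - a j) :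
    (∀ k : ℕ, 2 ≤ k →
      MonotoneOn (fun t => Nval a 0 k t / Nval a 0 (k - 1) t) (Set.Ici (0:ℝ))) ∧
    (∀ k : ℕ, 2 ≤ k →
      MonotoneOn (fun t => Nstar a 0 k t / Nstar a 0 (k - 1) t) (Set.Ioi (0:ℝ))) := by
  have hpart1 : ∀ k : ℕ, 2 ≤ k →
      MonotoneOn (fun t => Nval a 0 k t / Nval a 0 (k - 1) t) (Set.Ici (0:ℝ)) := by
    intro k hk
    obtain ⟨k', rfl⟩ : ∃ k', k = k' + 2 := ⟨k - 2, by omega⟩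
    intro s hs t ht hst
    simp only [show k' + 2 - 1 = k' + 1 by omega]
    have hs' : (0:ℝ) ≤ s := hs
    have hcross := nval_cross ha0 haI hmono hconc (k'+1) (by omega) hs' hst
    have hden_s : 0 < Nval a 0 (k'+1) s := nval_pos ha0 hmono (by omega) s
    have hden_t : 0 < Nval a 0 (k'+1) t := nval_pos ha0 hmono (by omega) t
    rw [div_le_div_iff₀ hden_s hden_t]
    exact hcross
  refine ⟨hpart1, ?_⟩
  intro k hk
  obtain ⟨k', rfl⟩ : ∃ k', k = k' + 2 := ⟨k - 2, by omega⟩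
  intro s hs t ht hst
  simp only [show k' + 2 - 1 = k' + 1 by omega]
  have hs' : (0:ℝ) < s := hs
  have ht' : (0:ℝ) < t := ht
  -- reduce Nstar-ratio to integral ratio
  have hrw : ∀ (n m : ℕ) (x : ℝ), Nstar a 0 n x / Nstar a 0 m x
      = (∫ y in (0:ℝ)..x, Nval a 0 n y * Real.exp y)
        / (∫ y in (0:ℝ)..x, Nval a 0 m y * Real.exp y) := by
    intro n m x
    show (Real.exp (-x) * _) / (Real.exp (-x) * _) = _
    rw [mul_div_mul_left _ _ (Real.exp_pos (-x)).ne']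
  simp only [hrw]
  set I2s := ∫ y in (0:ℝ)..s, Nval a 0 (k'+2) y * Real.exp y with hI2s
  set I1s := ∫ y in (0:ℝ)..s, Nval a 0 (k'+1) y * Real.exp y with hI1s
  have hI1s_pos : 0 < I1s := intI_pos ha0 hmono (by omega) hs'
  have hI1t_pos : 0 < ∫ y in (0:ℝ)..t, Nval a 0 (k'+1) y * Real.exp y :=
    intI_pos ha0 hmono (by omega) ht'
  rw [div_le_div_iff₀ hI1s_pos hI1t_pos]
  -- split the integrals at s
  have hint2 : IntervalIntegrable (fun y => Nval a 0 (k'+2) y * Real.exp y) volume s t :=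
    ((nval_cont a (k'+2)).mul Real.continuous_exp).intervalIntegrable _ _
  have hint1 : IntervalIntegrable (fun y => Nval a 0 (k'+1) y * Real.exp y) volume s t :=
    ((nval_cont a (k'+1)).mul Real.continuous_exp).intervalIntegrable _ _
  have hsplit2 : (∫ y in (0:ℝ)..t, Nval a 0 (k'+2) y * Real.exp y)
      = I2s + ∫ y in s..t, Nval a 0 (k'+2) y * Real.exp y := by
    rw [hI2s]
    rw [← intervalIntegral.integral_add_adjacent_intervals (f := fun y => Nval a 0 (k'+2) y * Real.exp y)
      (((nval_cont a (k'+2)).mul Real.continuous_exp).intervalIntegrable 0 s) hint2]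
  have hsplit1 : (∫ y in (0:ℝ)..t, Nval a 0 (k'+1) y * Real.exp y)
      = I1s + ∫ y in s..t, Nval a 0 (k'+1) y * Real.exp y := by
    rw [hI1s]
    rw [← intervalIntegral.integral_add_adjacent_intervals (f := fun y => Nval a 0 (k'+1) y * Real.exp y)
      (((nval_cont a (k'+1)).mul Real.continuous_exp).intervalIntegrable 0 s) hint1]
  set J2 := ∫ y in s..t, Nval a 0 (k'+2) y * Real.exp y with hJ2
  set J1 := ∫ y in s..t, Nval a 0 (k'+1) y * Real.exp y with hJ1
  rw [hsplit2, hsplit1]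
  -- key inequalities
  have hN1s : 0 < Nval a 0 (k'+1) s := nval_pos ha0 hmono (by omega) s
  have hA : I2s * Nval a 0 (k'+1) s ≤ Nval a 0 (k'+2) s * I1s := by
    have hmono_int : (∫ y in (0:ℝ)..s, (Nval a 0 (k'+2) y * Real.exp y) * Nval a 0 (k'+1) s)
        ≤ ∫ y in (0:ℝ)..s, Nval a 0 (k'+2) s * (Nval a 0 (k'+1) y * Real.exp y) := by
      apply intervalIntegral.integral_mono_on hs'.le
      · exact (((nval_cont a (k'+2)).mul Real.continuous_exp).mul
          continuous_const).intervalIntegrable _ _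
      · exact (continuous_const.mul
          ((nval_cont a (k'+1)).mul Real.continuous_exp)).intervalIntegrable _ _
      · intro x hx
        have hc := nval_cross ha0 haI hmono hconc (k'+1) (by omega) hx.1 hx.2
        nlinarith [Real.exp_pos x, hc]
    rw [intervalIntegral.integral_mul_const, intervalIntegral.integral_const_mul] at hmono_int
    exact hmono_int
  have hB : Nval a 0 (k'+2) s * J1 ≤ J2 * Nval a 0 (k'+1) s := by
    have hmono_int : (∫ y in s..t, Nval a 0 (k'+2) s * (Nval a 0 (k'+1) y * Real.exp y))
        ≤ ∫ y in s..t, (Nval a 0 (k'+2) y * Real.exp y) * Nval a 0 (k'+1) s := by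
      apply intervalIntegral.integral_mono_on hst
      · exact (continuous_const.mul
          ((nval_cont a (k'+1)).mul Real.continuous_exp)).intervalIntegrable _ _
      · exact (((nval_cont a (k'+2)).mul Real.continuous_exp).mul
          continuous_const).intervalIntegrable _ _
      · intro x hx
        have hc := nval_cross ha0 haI hmono hconc (k'+1) (by omega) hs'.le hx.1
        nlinarith [Real.exp_pos x, hc]
    rw [intervalIntegral.integral_mul_const, intervalIntegral.integral_const_mul] at hmono_int
    exact hmono_int
  have hJ1_nonneg : 0 ≤ J1 := by
    rw [hJ1]
    apply intervalIntegral.integral_nonneg hst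
    intro x _
    exact mul_nonneg (nval_nonneg a (k'+1) x ha0 haI) (Real.exp_pos x).le
  have hI1s_nonneg : 0 ≤ I1s := hI1s_pos.le
  -- combine
  have hkey : I2s * J1 ≤ J2 * I1s := by
    have step1 : (I2s * J1) * Nval a 0 (k'+1) s ≤ (Nval a 0 (k'+2) s * I1s) * J1 := by
      nlinarith [hA, hJ1_nonneg]
    have step2 : (Nval a 0 (k'+2) s * J1) * I1s ≤ (J2 * Nval a 0 (k'+1) s) * I1s := by
      nlinarith [hB, hI1s_nonneg]
    have : (I2s * J1) * Nval a 0 (k'+1) s ≤ (J2 * I1s) * Nval a 0 (k'+1) s := by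
      nlinarith [step1, step2]
    exact le_of_mul_le_mul_right this hN1s
  nlinarith [hkey]

end Assemble

/-- For the Frail Fighter (`u = 0`), for every `k ≥ 2` the ratio `t ↦ N(k,t)/N(k-1,t)`
is non-decreasing on `[0,∞)`; consequently `t ↦ N*(k,t)/N*(k-1,t)` is non-decreasing
on `(0,∞)`. -/
theorem frail_ratio_monotone
    (a : ℕ → ℝ) (haI : ∀ j, a j ∈ Set.Icc (0:ℝ) 1) (ha0 : a 0 = 0)
    (hmono : StrictMono a)
    (hconc : ∀ j : ℕ, a (j + 2) - a (j + 1) < a (j + 1) - a j) :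
    (∀ k : ℕ, 2 ≤ k →
      MonotoneOn (fun t => Nval a 0 k t / Nval a 0 (k - 1) t) (Set.Ici (0:ℝ))) ∧
    (∀ k : ℕ, 2 ≤ k →
      MonotoneOn (fun t => Nstar a 0 k t / Nstar a 0 (k - 1) t) (Set.Ioi (0:ℝ))) := by
  exact frail_ratio_monotone' ha0 haI hmono hconc
end
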